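/- arXiv:1106.0648 — 7 statements merged into one kernel-verified Lean document; each statement's English description precedes it below -/
import Mathlib

section
/- Let β > 0 and 0 < c < 2/(9β). Then the Gardner soliton profile satisfies the first-integral identity (Q_{c,β}')² = c·Q_{c,β}² − (2/3)·Q_{c,β}³ + (β/2)·Q_{c,β}⁴ at every point of ℝ. -/
/-- The Gardner soliton profile `Q_{c,β}(s) = 3c / (1 + ρ·cosh(√c·s))`,
with `ρ = (1 - 9βc/2)^{1/2}`. -/
noncomputable def gardnerQ (c β : ℝ) (s : ℝ) : ℝ :=
  3 * c / (1 + Real.sqrt (1 - 9 * β * c / 2) * Real.cosh (Real.sqrt c * s))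

theorem stmt2 (β c : ℝ) (hβ : 0 < β) (hc : 0 < c) (hc2 : c < 2 / (9 * β)) :
    ∀ s : ℝ, (deriv (gardnerQ c β) s) ^ 2
      = c * (gardnerQ c β s) ^ 2 - (2 / 3) * (gardnerQ c β s) ^ 3
        + (β / 2) * (gardnerQ c β s) ^ 4 := by
  intro s
  set ρ : ℝ := Real.sqrt (1 - 9 * β * c / 2) with hρdef
  set K : ℝ := Real.cosh (Real.sqrt c * s) with hKdef
  set S : ℝ := Real.sinh (Real.sqrt c * s) with hSdef
  have harg : 0 ≤ 1 - 9 * β * c / 2 := by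
    have h9 : 0 < 9 * β := by positivity
    have := (lt_div_iff₀ h9).mp hc2
    nlinarith
  have hρsq : ρ ^ 2 = 1 - 9 * β * c / 2 := Real.sq_sqrt harg
  have hρ0 : 0 ≤ ρ := Real.sqrt_nonneg _
  have hKpos : 0 < K := by rw [hKdef]; exact Real.cosh_pos _
  have hD : 0 < 1 + ρ * K := by positivity
  have hDne : 1 + ρ * K ≠ 0 := ne_of_gt hD
  have h1 : HasDerivAt (fun y : ℝ => Real.sqrt c * y) (Real.sqrt c) s := by
    simpa using (hasDerivAt_id s).const_mul (Real.sqrt c)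
  have h2 : HasDerivAt (fun y : ℝ => Real.cosh (Real.sqrt c * y))
      (S * Real.sqrt c) s :=
    (Real.hasDerivAt_cosh (Real.sqrt c * s)).comp s h1
  have h3 : HasDerivAt (fun y : ℝ => 1 + ρ * Real.cosh (Real.sqrt c * y))
      (ρ * (S * Real.sqrt c)) s :=
    (h2.const_mul ρ).const_add 1
  have h4 : HasDerivAt (gardnerQ c β)
      (-(3 * c * (ρ * (S * Real.sqrt c))) / (1 + ρ * K) ^ 2) s := by
    have := (hasDerivAt_const s (3 * c)).div h3 hDne
    rw [show gardnerQ c β = (fun x : ℝ => 3 * c) / (fun y : ℝ => 1 + ρ * Real.cosh (Real.sqrt c * y)) from by funext y; rfl]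
    simpa [hρdef, hKdef] using this
  rw [h4.deriv]
  have hsq : Real.sqrt c ^ 2 = c := Real.sq_sqrt hc.le
  have hsinh : S ^ 2 = K ^ 2 - 1 := by
    have := Real.cosh_sq_sub_sinh_sq (Real.sqrt c * s)
    rw [← hKdef, ← hSdef] at this
    linarith
  have hQ : gardnerQ c β s = 3 * c / (1 + ρ * K) := rfl
  rw [hQ]
  have key1 : (-(3 * c * (ρ * (S * Real.sqrt c))) / (1 + ρ * K) ^ 2) ^ 2
      = 9 * c ^ 3 * ρ ^ 2 * S ^ 2 / (1 + ρ * K) ^ 4 := by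
    rw [div_pow, ← pow_mul]
    norm_num
    congr 1
    linear_combination 9 * c ^ 2 * ρ ^ 2 * S ^ 2 * hsq
  have key2 : c * (3 * c / (1 + ρ * K)) ^ 2 - (2 / 3) * (3 * c / (1 + ρ * K)) ^ 3
        + (β / 2) * (3 * c / (1 + ρ * K)) ^ 4
      = (9 * c ^ 3 * (1 + ρ * K) ^ 2 - 18 * c ^ 3 * (1 + ρ * K)
          + (81 / 2) * β * c ^ 4) / (1 + ρ * K) ^ 4 := by
    field_simp
    ring
  rw [key1, key2]
  congr 1
  linear_combination 9 * c ^ 3 * ρ ^ 2 * hsinh - 9 * c ^ 3 * hρsq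
end

section
/- Let β > 0 and 0 < c < 2/(9β). Then the Gardner soliton profile Q_{c,β} is integrable on ℝ together with all its powers, and one has the integral identities β·∫_ℝ Q_{c,β}³ = −c·∫_ℝ Q_{c,β} + ∫_ℝ Q_{c,β}² and β·∫_ℝ Q_{c,β}⁴ = −(4c/3)·∫_ℝ Q_{c,β}² + (10/9)·∫_ℝ Q_{c,β}³. -/
open MeasureTheory Real Filter Set

lemma my_integral_eq_zero (F g : ℝ → ℝ) (hd : ∀ x, HasDerivAt F (g x) x)
    (hi : Integrable g) (htop : Tendsto F atTop (nhds 0))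
    (hbot : Tendsto F atBot (nhds 0)) : ∫ x, g x = 0 := by
  have h1 : ∫ x in Iic (0:ℝ), g x = F 0 - 0 :=
    integral_Iic_of_hasDerivAt_of_tendsto' (fun x _ => hd x) hi.integrableOn hbot
  have h2 : ∫ x in Ioi (0:ℝ), g x = 0 - F 0 :=
    integral_Ioi_of_hasDerivAt_of_tendsto' (fun x _ => hd x) hi.integrableOn htop
  have h3 := intervalIntegral.integral_Iic_add_Ioi (b := (0:ℝ)) (f := g)
    hi.integrableOn hi.integrableOn
  rw [← h3, h1, h2]; ring

lemma aux_cosh_lb (a c : ℝ) (hc : 0 < c) (ha2 : a^2 = c) (s : ℝ) :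
    min 2 c / 4 * (1+s^2) ≤ Real.cosh (a*s) := by
  have h1 : Real.exp |a*s| ≤ 2*Real.cosh (a*s) := by
    rw [← Real.cosh_abs, Real.cosh_eq]
    have := Real.exp_pos (-|a*s|); linarith
  have h2 : 1 + |a*s| + |a*s|^2/2 ≤ Real.exp |a*s| :=
    Real.quadratic_le_exp_of_nonneg (abs_nonneg _)
  have h3 : |a*s|^2 = c*s^2 := by rw [sq_abs, mul_pow, ha2]
  have h4 := abs_nonneg (a*s)
  have h5 : min 2 c ≤ 2 := min_le_left _ _
  have h6 : min 2 c ≤ c := min_le_right _ _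
  nlinarith [sq_nonneg s, mul_le_mul_of_nonneg_right h6 (sq_nonneg s)]

lemma aux_deriv1 (a ρ c β : ℝ) (hρ : 0 < ρ) (ha2 : a^2 = c)
    (hρ2 : ρ^2 = 1 - 9*β*c/2) (s : ℝ) :
    HasDerivAt (fun x => -(3*c*ρ*a) * (Real.sinh (a*x) / (1+ρ*Real.cosh (a*x))^2))
      (β*(3*c/(1+ρ*Real.cosh (a*s)))^3 + c*(3*c/(1+ρ*Real.cosh (a*s)))
        - (3*c/(1+ρ*Real.cosh (a*s)))^2) s := by
  have hK1 : 1 ≤ Real.cosh (a*s) := Real.one_le_cosh _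
  have hD0 : 0 < 1 + ρ*Real.cosh (a*s) := by nlinarith
  have hDne : (1 + ρ*Real.cosh (a*s)) ≠ 0 := ne_of_gt hD0
  have hlin : HasDerivAt (fun x:ℝ => a*x) a s := by
    simpa using (hasDerivAt_id s).const_mul a
  have hsinh : HasDerivAt (fun x => Real.sinh (a*x)) (Real.cosh (a*s) * a) s :=
    (Real.hasDerivAt_sinh (a*s)).comp s hlin
  have hcosh : HasDerivAt (fun x => Real.cosh (a*x)) (Real.sinh (a*s) * a) s :=
    (Real.hasDerivAt_cosh (a*s)).comp s hlin
  have hden : HasDerivAt (fun x => (1+ρ*Real.cosh (a*x))^2)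
      ((2:ℕ)*(1+ρ*Real.cosh (a*s))^1 * (ρ*(Real.sinh (a*s)*a))) s :=
    ((hcosh.const_mul ρ).const_add 1).pow 2
  have hne : ((1+ρ*Real.cosh (a*s))^2) ≠ 0 := pow_ne_zero _ hDne
  have h := (hsinh.div hden hne).const_mul (-(3*c*ρ*a))
  refine h.congr_deriv ?_
  have hs2 : Real.sinh (a*s)^2 = Real.cosh (a*s)^2 - 1 := Real.sinh_sq _
  set K := Real.cosh (a*s)
  set S := Real.sinh (a*s)
  have hnum : -(3*c*ρ)*(K*(1+ρ*K) - 2*ρ*S^2) * a^2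
      = 3*c^2*((1+ρ*K)^2 - 3*(1+ρ*K) + 9*β*c) := by
    rw [ha2]
    linear_combination 6*c^2*ρ^2*hs2 - 6*c^2*hρ2
  have hsplit : -(3*c*ρ*a) * ((K * a * ((1+ρ*K)^2)
        - S * ((2:ℕ)*(1+ρ*K)^1 * (ρ*(S*a)))) / ((1+ρ*K)^2)^2)
      = (-(3*c*ρ)*(K*(1+ρ*K) - 2*ρ*S^2) * a^2) / (1+ρ*K)^3 := by
    field_simp
    ring
  rw [hsplit, hnum]
  field_simp
  ring

lemma aux_deriv2 (a ρ c β : ℝ) (hρ : 0 < ρ) (ha2 : a^2 = c)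
    (hρ2 : ρ^2 = 1 - 9*β*c/2) (s : ℝ) :
    HasDerivAt (fun x => -(6*c^2*ρ*a) * (Real.sinh (a*x) / (1+ρ*Real.cosh (a*x))^3))
      (β*(3*c/(1+ρ*Real.cosh (a*s)))^4 + (4*c/3)*(3*c/(1+ρ*Real.cosh (a*s)))^2
        - (10/9)*(3*c/(1+ρ*Real.cosh (a*s)))^3) s := by
  have hK1 : 1 ≤ Real.cosh (a*s) := Real.one_le_cosh _
  have hD0 : 0 < 1 + ρ*Real.cosh (a*s) := by nlinarith
  have hDne : (1 + ρ*Real.cosh (a*s)) ≠ 0 := ne_of_gt hD0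
  have hlin : HasDerivAt (fun x:ℝ => a*x) a s := by
    simpa using (hasDerivAt_id s).const_mul a
  have hsinh : HasDerivAt (fun x => Real.sinh (a*x)) (Real.cosh (a*s) * a) s :=
    (Real.hasDerivAt_sinh (a*s)).comp s hlin
  have hcosh : HasDerivAt (fun x => Real.cosh (a*x)) (Real.sinh (a*s) * a) s :=
    (Real.hasDerivAt_cosh (a*s)).comp s hlin
  have hden : HasDerivAt (fun x => (1+ρ*Real.cosh (a*x))^3)
      ((3:ℕ)*(1+ρ*Real.cosh (a*s))^2 * (ρ*(Real.sinh (a*s)*a))) s :=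
    ((hcosh.const_mul ρ).const_add 1).pow 3
  have hne : ((1+ρ*Real.cosh (a*s))^3) ≠ 0 := pow_ne_zero _ hDne
  have h := (hsinh.div hden hne).const_mul (-(6*c^2*ρ*a))
  refine h.congr_deriv ?_
  have hs2 : Real.sinh (a*s)^2 = Real.cosh (a*s)^2 - 1 := Real.sinh_sq _
  set K := Real.cosh (a*s)
  set S := Real.sinh (a*s)
  have hnum : -(6*c^2*ρ)*(K*(1+ρ*K) - 3*ρ*S^2) * a^2
      = c^3*(12*(1+ρ*K)^2 - 30*(1+ρ*K) + 81*β*c) := by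
    rw [ha2]
    linear_combination 18*c^3*ρ^2*hs2 - 18*c^3*hρ2
  have hsplit : -(6*c^2*ρ*a) * ((K * a * ((1+ρ*K)^3)
        - S * ((3:ℕ)*(1+ρ*K)^2 * (ρ*(S*a)))) / ((1+ρ*K)^3)^2)
      = (-(6*c^2*ρ)*(K*(1+ρ*K) - 3*ρ*S^2) * a^2) / (1+ρ*K)^4 := by
    field_simp
    ring
  rw [hsplit, hnum]
  field_simp
  ring

theorem stmt3 (β c : ℝ) (hβ : 0 < β) (hc : 0 < c) (hc2 : c < 2 / (9 * β)) :
    (∀ n : ℕ, 1 ≤ n → MeasureTheory.Integrable (fun s => (gardnerQ c β s) ^ n)) ∧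
    (β * (∫ s : ℝ, (gardnerQ c β s) ^ 3)
      = -c * (∫ s : ℝ, gardnerQ c β s) + ∫ s : ℝ, (gardnerQ c β s) ^ 2) ∧
    (β * (∫ s : ℝ, (gardnerQ c β s) ^ 4)
      = -(4 * c / 3) * (∫ s : ℝ, (gardnerQ c β s) ^ 2)
        + (10 / 9) * ∫ s : ℝ, (gardnerQ c β s) ^ 3) := by
  have h9 : 9*β*c < 2 := by
    rw [lt_div_iff₀ (by positivity)] at hc2; nlinarith
  obtain ⟨a, ha, ha2, haq⟩ : ∃ a, 0 < a ∧ a^2 = c ∧ Real.sqrt c = a :=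
    ⟨Real.sqrt c, Real.sqrt_pos.2 hc, Real.sq_sqrt hc.le, rfl⟩
  obtain ⟨ρ, hρ, hρ2, hρq⟩ : ∃ ρ, 0 < ρ ∧ ρ^2 = 1-9*β*c/2 ∧ Real.sqrt (1-9*β*c/2) = ρ :=
    ⟨_, Real.sqrt_pos.2 (by linarith), Real.sq_sqrt (by linarith), rfl⟩
  have hQ : ∀ s, gardnerQ c β s = 3*c/(1+ρ*Real.cosh (a*s)) := by
    intro s; rw [gardnerQ, haq, hρq]
  set m0 : ℝ := min 2 c / 4 with hm0def
  have hm0 : 0 < m0 := div_pos (lt_min (by norm_num) hc) (by norm_num)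
  have hKlb : ∀ s:ℝ, m0*(1+s^2) ≤ Real.cosh (a*s) := fun s => aux_cosh_lb a c hc ha2 s
  have hK1 : ∀ x:ℝ, 1 ≤ Real.cosh x := Real.one_le_cosh
  have hD0 : ∀ s:ℝ, 0 < 1+ρ*Real.cosh (a*s) := by
    intro s; nlinarith [hK1 (a*s)]
  have hD1 : ∀ s:ℝ, 1 ≤ 1+ρ*Real.cosh (a*s) := by
    intro s; nlinarith [hK1 (a*s)]
  have hDlb : ∀ s:ℝ, ρ*(m0*(1+s^2)) ≤ 1+ρ*Real.cosh (a*s) := by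
    intro s
    have h := hKlb s
    nlinarith [hKlb s]
  have hQ0 : ∀ s, 0 ≤ gardnerQ c β s := by
    intro s; rw [hQ]
    positivity
  have hQ3c : ∀ s, gardnerQ c β s ≤ 3*c := by
    intro s; rw [hQ, div_le_iff₀ (hD0 s)]
    nlinarith [hD1 s]
  have hQle : ∀ s, gardnerQ c β s ≤ (3*c/(ρ*m0)) * (1+s^2)⁻¹ := by
    intro s; rw [hQ]
    have h1 : 0 < ρ*(m0*(1+s^2)) := by positivity
    calc 3*c/(1+ρ*Real.cosh (a*s)) ≤ 3*c/(ρ*(m0*(1+s^2))) := by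
          rw [div_le_div_iff₀ (hD0 s) h1]
          exact mul_le_mul_of_nonneg_left (hDlb s) (by positivity)
      _ = (3*c/(ρ*m0))*(1+s^2)⁻¹ := by
          have : (1:ℝ)+s^2 ≠ 0 := by positivity
          field_simp
  have hQcont : Continuous (gardnerQ c β) := by
    have hcont : Continuous fun s => 3*c/(1+ρ*Real.cosh (a*s)) :=
      continuous_const.div
        (continuous_const.add (continuous_const.mul
          (Real.continuous_cosh.comp (continuous_const.mul continuous_id))))
        (fun s => ne_of_gt (hD0 s))
    exact (funext hQ : gardnerQ c β = _) ▸ hcont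
  have hint : ∀ n : ℕ, 1 ≤ n → Integrable (fun s => (gardnerQ c β s)^n) := by
    intro n hn
    apply Integrable.mono' ((integrable_inv_one_add_sq).const_mul ((3*c)^(n-1) * (3*c/(ρ*m0))))
      ((hQcont.pow n).aestronglyMeasurable)
    refine Filter.Eventually.of_forall (fun s => ?_)
    rw [Real.norm_eq_abs, Pi.pow_apply, abs_of_nonneg (pow_nonneg (hQ0 s) n)]
    calc (gardnerQ c β s)^n = (gardnerQ c β s)^(n-1) * gardnerQ c β s := by
          rw [← pow_succ, Nat.sub_add_cancel hn]
      _ ≤ (3*c)^(n-1) * ((3*c/(ρ*m0)) * (1+s^2)⁻¹) :=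
          mul_le_mul (pow_le_pow_left₀ (hQ0 s) (hQ3c s) _) (hQle s) (hQ0 s) (by positivity)
      _ = (3*c)^(n-1) * (3*c/(ρ*m0)) * (1+s^2)⁻¹ := by ring
  -- sinh bound
  have habs : ∀ s:ℝ, |Real.sinh (a*s)| ≤ Real.cosh (a*s) := by
    intro s
    have h := Real.sinh_sq (a*s)
    nlinarith [abs_nonneg (Real.sinh (a*s)), sq_abs (Real.sinh (a*s)), Real.cosh_pos (a*s)]
  -- norm bounds for the antiderivatives
  have hFb : ∀ (A : ℝ) (m : ℕ), 0 ≤ A → 2 ≤ m → ∀ s : ℝ,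
      ‖-(A*ρ*a) * (Real.sinh (a*s) / (1+ρ*Real.cosh (a*s))^m)‖
        ≤ (A*a/(ρ*m0)) * (1+s^2)⁻¹ := by
    intro A m hA hm s
    have hD0s := hD0 s
    have hKpos := Real.cosh_pos (a*s)
    have hd2 : (ρ*Real.cosh (a*s))*(ρ*(m0*(1+s^2))) ≤ (1+ρ*Real.cosh (a*s))^m := by
      have e1 : ρ*Real.cosh (a*s) ≤ 1+ρ*Real.cosh (a*s) := by linarith
      have e2 : (1+ρ*Real.cosh (a*s))^2 ≤ (1+ρ*Real.cosh (a*s))^m :=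
        pow_le_pow_right₀ (hD1 s) hm
      calc (ρ*Real.cosh (a*s))*(ρ*(m0*(1+s^2)))
          ≤ (1+ρ*Real.cosh (a*s)) * (1+ρ*Real.cosh (a*s)) :=
            mul_le_mul e1 (hDlb s) (by positivity) hD0s.le
        _ = (1+ρ*Real.cosh (a*s))^2 := by ring
        _ ≤ _ := e2
    rw [norm_eq_abs, abs_mul, abs_neg, abs_of_nonneg (by positivity : (0:ℝ) ≤ A*ρ*a),
      abs_div, abs_of_pos (pow_pos hD0s m)]
    calc A*ρ*a * (|Real.sinh (a*s)| / (1+ρ*Real.cosh (a*s))^m)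
        ≤ A*ρ*a * (Real.cosh (a*s) / ((ρ*Real.cosh (a*s))*(ρ*(m0*(1+s^2))))) := by
          apply mul_le_mul_of_nonneg_left _ (by positivity)
          exact div_le_div₀ hKpos.le (habs s) (by positivity) hd2
      _ = (A*a/(ρ*m0)) * (1+s^2)⁻¹ := by
          have h1 : Real.cosh (a*s) ≠ 0 := ne_of_gt hKpos
          have h2 : (1:ℝ)+s^2 ≠ 0 := by positivity
          field_simp
  -- tendsto lemmas
  have h2top : Tendsto (fun s:ℝ => 1+s^2) atTop atTop :=
    tendsto_atTop_add_const_left _ 1 (tendsto_pow_atTop two_ne_zero)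
  have h2bot : Tendsto (fun s:ℝ => 1+s^2) atBot atTop := by
    refine tendsto_atTop_add_const_left _ 1 ?_
    have := (tendsto_pow_atTop (two_ne_zero)).comp
      (tendsto_neg_atBot_atTop : Tendsto (fun x:ℝ => -x) atBot atTop)
    simpa [Function.comp_def, neg_pow] using this
  have htend : ∀ (B : ℝ), Tendsto (fun s:ℝ => B*(1+s^2)⁻¹) atTop (nhds 0) := by
    intro B
    simpa using (h2top.inv_tendsto_atTop).const_mul B
  have htendb : ∀ (B : ℝ), Tendsto (fun s:ℝ => B*(1+s^2)⁻¹) atBot (nhds 0) := by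
    intro B
    simpa using (h2bot.inv_tendsto_atTop).const_mul B
  -- integrability of the two combinations
  have hi1 : Integrable (fun s => gardnerQ c β s) := by
    simpa using hint 1 le_rfl
  have hi2 := hint 2 (by norm_num)
  have hi3 := hint 3 (by norm_num)
  have hi4 := hint 4 (by norm_num)
  have hg1int : Integrable (fun s => β*(gardnerQ c β s)^3 + c*(gardnerQ c β s)
      - (gardnerQ c β s)^2) :=
    ((hi3.const_mul β).add (hi1.const_mul c)).sub hi2
  have hg2int : Integrable (fun s => β*(gardnerQ c β s)^4 + (4*c/3)*(gardnerQ c β s)^2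
      - (10/9)*(gardnerQ c β s)^3) :=
    ((hi4.const_mul β).add (hi2.const_mul (4*c/3))).sub (hi3.const_mul (10/9))
  -- zero integrals
  have hz1 : ∫ s, (β*(gardnerQ c β s)^3 + c*(gardnerQ c β s) - (gardnerQ c β s)^2) = 0 := by
    apply my_integral_eq_zero
      (fun x => -(3*c*ρ*a) * (Real.sinh (a*x)/(1+ρ*Real.cosh (a*x))^2)) _
      (fun x => by rw [hQ]; exact aux_deriv1 a ρ c β hρ ha2 hρ2 x) hg1int
    · exact squeeze_zero_norm (fun s => hFb (3*c) 2 (by positivity) le_rfl s)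
        (htend (3*c*a/(ρ*m0)))
    · exact squeeze_zero_norm (fun s => hFb (3*c) 2 (by positivity) le_rfl s)
        (htendb (3*c*a/(ρ*m0)))
  have hz2 : ∫ s, (β*(gardnerQ c β s)^4 + (4*c/3)*(gardnerQ c β s)^2
      - (10/9)*(gardnerQ c β s)^3) = 0 := by
    apply my_integral_eq_zero
      (fun x => -(6*c^2*ρ*a) * (Real.sinh (a*x)/(1+ρ*Real.cosh (a*x))^3)) _
      (fun x => by rw [hQ]; exact aux_deriv2 a ρ c β hρ ha2 hρ2 x) hg2int
    · exact squeeze_zero_norm (fun s => hFb (6*c^2) 3 (by positivity) (by norm_num) s)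
        (htend (6*c^2*a/(ρ*m0)))
    · exact squeeze_zero_norm (fun s => hFb (6*c^2) 3 (by positivity) (by norm_num) s)
        (htendb (6*c^2*a/(ρ*m0)))
  -- linearity
  have e1 : ∫ s, (β*(gardnerQ c β s)^3 + c*(gardnerQ c β s) - (gardnerQ c β s)^2)
      = β*(∫ s, (gardnerQ c β s)^3) + c*(∫ s, gardnerQ c β s) - ∫ s, (gardnerQ c β s)^2 := by
    have hA : Integrable (fun s => β*(gardnerQ c β s)^3) := hi3.const_mul β
    have hB : Integrable (fun s => c*(gardnerQ c β s)) := hi1.const_mul c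
    have hAB : Integrable (fun s => β*(gardnerQ c β s)^3 + c*(gardnerQ c β s)) := hA.add hB
    rw [integral_sub hAB hi2, integral_add hA hB, integral_const_mul _ _, integral_const_mul _ _]
  have e2 : ∫ s, (β*(gardnerQ c β s)^4 + (4*c/3)*(gardnerQ c β s)^2
        - (10/9)*(gardnerQ c β s)^3)
      = β*(∫ s, (gardnerQ c β s)^4) + (4*c/3)*(∫ s, (gardnerQ c β s)^2)
        - (10/9)*∫ s, (gardnerQ c β s)^3 := by
    have hA : Integrable (fun s => β*(gardnerQ c β s)^4) := hi4.const_mul β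
    have hB : Integrable (fun s => (4*c/3)*(gardnerQ c β s)^2) := hi2.const_mul (4*c/3)
    have hC : Integrable (fun s => (10/9)*(gardnerQ c β s)^3) := hi3.const_mul (10/9)
    have hAB : Integrable (fun s => β*(gardnerQ c β s)^4 + (4*c/3)*(gardnerQ c β s)^2) :=
      hA.add hB
    rw [integral_sub hAB hC, integral_add hA hB, integral_const_mul _ _, integral_const_mul _ _,
      integral_const_mul _ _]
  refine ⟨hint, ?_, ?_⟩
  · rw [e1] at hz1; linarith
  · rw [e2] at hz2; linarith
end

section
/- Let β > 0 and 0 < c < 2/(9β). Then the Gardner soliton profile satisfies ∫_ℝ Q_{c,β} = (3β/2)·∫_ℝ Q_{c,β}² + 6√c. -/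
lemma cosh_quad_bound (u : ℝ) : (1 + u ^ 2) / 2 ≤ Real.cosh u := by
  have h : ∀ v : ℝ, 0 ≤ v → (1 + v ^ 2) / 2 ≤ Real.cosh v := by
    intro v hv
    have h1 : v / 2 ≤ Real.sinh (v / 2) := by
      rcases eq_or_lt_of_le hv with h | h
      · simp [← h]
      · exact (Real.self_lt_sinh_iff.2 (by linarith)).le
    have h2 : (v / 2) ^ 2 ≤ Real.sinh (v / 2) ^ 2 := by
      apply sq_le_sq' _ h1
      nlinarith [Real.sinh_pos_iff (x := v / 2)]
    have h3 : Real.cosh v = 2 * Real.sinh (v / 2) ^ 2 + 1 := by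
      have := Real.cosh_two_mul (v / 2)
      have h4 := Real.cosh_sq (v / 2)
      rw [show 2 * (v / 2) = v by ring] at this
      linarith
    nlinarith
  rcases le_total 0 u with h0 | h0
  · exact h u h0
  · have := h (-u) (by linarith)
    simpa [Real.cosh_neg] using this

theorem stmt4 (β c : ℝ) (hβ : 0 < β) (hc : 0 < c) (hc2 : c < 2 / (9 * β)) :
    (∫ s : ℝ, gardnerQ c β s)
      = (3 * β / 2) * (∫ s : ℝ, (gardnerQ c β s) ^ 2) + 6 * Real.sqrt c := by
  set a := Real.sqrt c with ha_def
  have ha : 0 < a := Real.sqrt_pos.2 hc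
  have ha2 : a ^ 2 = c := Real.sq_sqrt hc.le
  set ρ := Real.sqrt (1 - 9 * β * c / 2) with hρ_def
  have h9 : 9 * β * c / 2 < 1 := by
    have h90 : 0 < 9 * β := by linarith
    nlinarith [(lt_div_iff₀ h90).mp hc2]
  have h9' : 0 < 1 - 9 * β * c / 2 := by linarith
  have hρpos : 0 < ρ := Real.sqrt_pos.2 h9'
  have hρsq : ρ ^ 2 = 1 - 9 * β * c / 2 := Real.sq_sqrt h9'.le
  have hρlt : ρ < 1 := by nlinarith
  -- denominator
  set D : ℝ → ℝ := fun s => 1 + ρ * Real.cosh (a * s) with hD_def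
  have hD_pos : ∀ s, 0 < D s := fun s => by
    have := Real.one_le_cosh (a * s)
    have : ρ * 1 ≤ ρ * Real.cosh (a * s) := by
      exact mul_le_mul_of_nonneg_left this hρpos.le
    simp only [hD_def]; nlinarith
  have hQ_eq : ∀ s, gardnerQ c β s = 3 * c / D s := fun s => rfl
  have hQ_cont : Continuous (gardnerQ c β) := by
    apply Continuous.div continuous_const
    · exact continuous_const.add (continuous_const.mul
        (Real.continuous_cosh.comp (continuous_const.mul continuous_id)))
    · exact fun s => (hD_pos s).ne'
  have hQ_nonneg : ∀ s, 0 ≤ gardnerQ c β s := fun s => by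
    rw [hQ_eq]; positivity
  -- integrability of Q
  have hbase : MeasureTheory.Integrable (fun s : ℝ => (1 + (a * s) ^ 2)⁻¹) := by
    exact (MeasureTheory.integrable_comp_mul_left_iff
      (fun x : ℝ => (1 + x ^ 2)⁻¹) ha.ne').2 integrable_inv_one_add_sq
  have hQ_le : ∀ s, gardnerQ c β s ≤ (6 * c / ρ) * (1 + (a * s) ^ 2)⁻¹ := by
    intro s
    have hb := cosh_quad_bound (a * s)
    have hden : ρ * ((1 + (a * s) ^ 2) / 2) ≤ D s := by
      have : ρ * ((1 + (a * s) ^ 2) / 2) ≤ ρ * Real.cosh (a * s) :=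
        mul_le_mul_of_nonneg_left hb hρpos.le
      simp only [hD_def]; linarith
    rw [hQ_eq]
    rw [div_le_iff₀ (hD_pos s)]
    have h1 : 0 < 1 + (a * s) ^ 2 := by positivity
    have key : (6 * c / ρ) * (1 + (a * s) ^ 2)⁻¹ * (ρ * ((1 + (a * s) ^ 2) / 2)) = 3 * c := by
      field_simp; ring
    calc 3 * c = (6 * c / ρ) * (1 + (a * s) ^ 2)⁻¹ * (ρ * ((1 + (a * s) ^ 2) / 2)) := key.symm
      _ ≤ (6 * c / ρ) * (1 + (a * s) ^ 2)⁻¹ * D s := by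
          apply mul_le_mul_of_nonneg_left hden
          positivity
  have hQint : MeasureTheory.Integrable (gardnerQ c β) := by
    apply MeasureTheory.Integrable.mono' (hbase.const_mul (6 * c / ρ))
      hQ_cont.aestronglyMeasurable
    filter_upwards with s
    rw [Real.norm_eq_abs, abs_of_nonneg (hQ_nonneg s)]
    exact hQ_le s
  have hQ_le3c : ∀ s, gardnerQ c β s ≤ 3 * c := fun s => by
    rw [hQ_eq]
    rw [div_le_iff₀ (hD_pos s)]
    have h1 : 1 ≤ D s := by
      have := Real.one_le_cosh (a * s)
      simp only [hD_def]; nlinarith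
    nlinarith
  have hQ2int : MeasureTheory.Integrable (fun s => (gardnerQ c β s) ^ 2) := by
    apply MeasureTheory.Integrable.mono' (hQint.const_mul (3 * c))
      (hQ_cont.pow 2).aestronglyMeasurable
    filter_upwards with s
    simp only [Pi.pow_apply]
    rw [Real.norm_eq_abs, abs_of_nonneg (by positivity)]
    have := hQ_nonneg s
    nlinarith [hQ_le3c s]
  -- the antiderivative
  set F : ℝ → ℝ := fun s => 3 * a * ρ * (Real.sinh (a * s) / D s) with hF_def
  set g : ℝ → ℝ := fun s => gardnerQ c β s - 3 * β / 2 * (gardnerQ c β s) ^ 2 with hg_def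
  have hgint : MeasureTheory.Integrable g := hQint.sub (hQ2int.const_mul _)
  have hderiv : ∀ s, HasDerivAt F (g s) s := by
    intro s
    have hlin : HasDerivAt (fun s : ℝ => a * s) a s := by
      simpa using (hasDerivAt_id s).const_mul a
    have hsinh : HasDerivAt (fun s : ℝ => Real.sinh (a * s)) (Real.cosh (a * s) * a) s :=
      (Real.hasDerivAt_sinh (a * s)).comp s hlin
    have hcosh : HasDerivAt (fun s : ℝ => Real.cosh (a * s)) (Real.sinh (a * s) * a) s :=
      (Real.hasDerivAt_cosh (a * s)).comp s hlin
    have hden : HasDerivAt D (ρ * (Real.sinh (a * s) * a)) s := by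
      simpa [hD_def] using ((hcosh.const_mul ρ).const_add 1)
    have hdiv : HasDerivAt (fun s => Real.sinh (a * s) / D s)
        ((Real.cosh (a * s) * a * D s - Real.sinh (a * s) * (ρ * (Real.sinh (a * s) * a)))
          / (D s) ^ 2) s := hsinh.div hden (hD_pos s).ne'
    have := hdiv.const_mul (3 * a * ρ)
    convert this using 1
    · rfl
    · rfl
    have hDne : D s ≠ 0 := (hD_pos s).ne'
    have hcs := Real.cosh_sq_sub_sinh_sq (a * s)
    have hQs : gardnerQ c β s = 3 * c / D s := hQ_eq s
    have key : 3 * c / D s - 3 * β / 2 * (3 * c / D s) ^ 2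
        = (3 * c * D s - 27 * β * c ^ 2 / 2) / (D s) ^ 2 := by
      field_simp
      ring
    have key2 : 3 * c * D s - 27 * β * c ^ 2 / 2
        = 3 * a * ρ * (Real.cosh (a * s) * a * D s
            - Real.sinh (a * s) * (ρ * (Real.sinh (a * s) * a))) := by
      simp only [hD_def]
      linear_combination (-3 * c) * hρsq + (-3 * c * ρ ^ 2) * hcs
        + (-3 * ρ * Real.cosh (a * s)
            - 3 * ρ ^ 2 * (Real.cosh (a * s) ^ 2 - Real.sinh (a * s) ^ 2)) * ha2
    show gardnerQ c β s - 3 * β / 2 * gardnerQ c β s ^ 2 = _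
    rw [hQ_eq s, key, key2, mul_div_assoc]
  -- limits
  have hodd : ∀ s, F (-s) = - F s := by
    intro s
    simp only [hF_def, hD_def, mul_neg, Real.sinh_neg, Real.cosh_neg]
    ring
  set φ : ℝ → ℝ := fun t => 3 * a * ρ * ((1 - t ^ 2) / (2 * t + ρ * (1 + t ^ 2))) with hφ_def
  have hFφ : ∀ s, F s = φ (Real.exp (-(a * s))) := by
    intro s
    have hepos : 0 < Real.exp (a * s) := Real.exp_pos _
    set t := Real.exp (a * s) with ht_def
    have htne : t ≠ 0 := hepos.ne'
    have hfrac : Real.sinh (a * s) / D s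
        = (1 - (t⁻¹) ^ 2) / (2 * t⁻¹ + ρ * (1 + (t⁻¹) ^ 2)) := by
      have hd1 : (0:ℝ) < 1 + ρ * ((t + t⁻¹) / 2) := by positivity
      have hd2 : (0:ℝ) < 2 * t⁻¹ + ρ * (1 + (t⁻¹) ^ 2) := by positivity
      simp only [hD_def, Real.sinh_eq, Real.cosh_eq, Real.exp_neg, ← ht_def]
      rw [div_eq_div_iff hd1.ne' hd2.ne']
      field_simp
    rw [Real.exp_neg, ← ht_def]
    simp only [hF_def, hφ_def, hfrac]
  have hexp_top : Filter.Tendsto (fun s : ℝ => Real.exp (-(a * s))) Filter.atTop (nhds 0) := by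
    apply Real.tendsto_exp_atBot.comp
    apply Filter.tendsto_neg_atBot_iff.mpr
    exact (Filter.tendsto_id.const_mul_atTop ha)
  have hφcont : Filter.Tendsto φ (nhds 0) (nhds (3 * a)) := by
    have h0 : φ 0 = 3 * a := by
      simp only [hφ_def]
      field_simp
      ring
    rw [← h0]
    apply ContinuousAt.tendsto
    apply ContinuousAt.mul continuousAt_const
    apply ContinuousAt.div
    · fun_prop
    · fun_prop
    · simp; positivity
  have htop : Filter.Tendsto F Filter.atTop (nhds (3 * a)) := by
    have := hφcont.comp hexp_top
    apply this.congr
    intro s; exact (hFφ s).symm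
  have hbot : Filter.Tendsto F Filter.atBot (nhds (-(3 * a))) := by
    have h1 : Filter.Tendsto (fun s : ℝ => F (-s)) Filter.atBot (nhds (3 * a)) :=
      htop.comp Filter.tendsto_neg_atBot_atTop
    have h2 := h1.neg
    apply h2.congr
    intro s
    rw [hodd s]; ring
  -- fundamental theorem
  have hint : (∫ s : ℝ, g s) = 3 * a - (-(3 * a)) :=
    MeasureTheory.integral_of_hasDerivAt_of_tendsto hderiv hgint hbot htop
  have hsplit : (∫ s : ℝ, g s)
      = (∫ s : ℝ, gardnerQ c β s) - 3 * β / 2 * (∫ s : ℝ, (gardnerQ c β s) ^ 2) := by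
    simp only [hg_def]
    rw [MeasureTheory.integral_sub hQint (hQ2int.const_mul _),
      MeasureTheory.integral_const_mul]
  rw [hsplit] at hint
  linarith
end

section
/- Let β > 0 and 0 < c < 2/(9β). Define the Gardner energy E_β[Q_{c,β}] := (1/2)·∫_ℝ (Q_{c,β}')² − (1/3)·∫_ℝ Q_{c,β}³ + (β/4)·∫_ℝ Q_{c,β}⁴. Then E_β[Q_{c,β}] = (2/(3β))·c^{3/2} − (1/(9β))·∫_ℝ Q_{c,β}². -/
/-- The Gardner energy `E_β[w] = (1/2)∫ (w')² − (1/3)∫ w³ + (β/4)∫ w⁴`. -/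
noncomputable def gardnerEnergy (β : ℝ) (w : ℝ → ℝ) : ℝ :=
  (1 / 2) * (∫ s : ℝ, (deriv w s) ^ 2) - (1 / 3) * (∫ s : ℝ, (w s) ^ 3)
    + (β / 4) * ∫ s : ℝ, (w s) ^ 4

open Real MeasureTheory Filter Topology Set

open Real MeasureTheory Filter Topology Set

-- derivative of Q(s) = 3c/(1+r cosh(k s))
lemma aux_hasDerivQ (c k r : ℝ) (s : ℝ) (hD : 1 + r * Real.cosh (k*s) ≠ 0) :
    HasDerivAt (fun t => 3*c/(1 + r * Real.cosh (k*t)))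
      (-(3*c*r*k*Real.sinh (k*s))/(1 + r*Real.cosh (k*s))^2) s := by
  have hD' : HasDerivAt (fun t => 1 + r * Real.cosh (k*t))
      (r * (Real.sinh (k*s) * k)) s := by
    have : HasDerivAt (fun t : ℝ => k * t) k s := by
      simpa using (hasDerivAt_id s).const_mul k
    exact ((this.cosh).const_mul r).const_add 1
  have := (hasDerivAt_const s (3*c)).div hD' hD
  refine this.congr_deriv (Eq.symm ?_)
  field_simp
  ring


lemma aux_sq (β c k r : ℝ) (hk2 : k^2 = c) (hr2 : r^2 = 1 - 9*β*c/2)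
    (s : ℝ) (hD : (1 + r*Real.cosh (k*s)) ≠ 0) :
    (-(3*c*r*k*Real.sinh (k*s))/(1 + r*Real.cosh (k*s))^2)^2
      = c*(3*c/(1+r*Real.cosh (k*s)))^2 - (2/3)*(3*c/(1+r*Real.cosh (k*s)))^3
        + (β/2)*(3*c/(1+r*Real.cosh (k*s)))^4 := by
  have hv : Real.sinh (k*s)^2 = Real.cosh (k*s)^2 - 1 := by
    have := Real.cosh_sq_sub_sinh_sq (k*s); linarith
  set u := Real.cosh (k*s)
  set v := Real.sinh (k*s)
  have e1 : (-(3*c*r*k*v)/(1+r*u)^2)^2 = (9*c^2*r^2*k^2*v^2)/((1+r*u)^2)^2 := by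
    rw [div_pow]; congr 1; ring
  have e2 : c*(3*c/(1+r*u))^2 - (2/3)*(3*c/(1+r*u))^3 + (β/2)*(3*c/(1+r*u))^4
      = (9*c^3*((1+r*u)^2 - 2*(1+r*u)) + (81/2)*β*c^4)/((1+r*u)^2)^2 := by
    field_simp
    ring
  rw [e1, e2]
  congr 1
  linear_combination (9*c^2*r^2*v^2) * hk2 + (9*c^3*r^2) * hv + (-(9*c^3)) * hr2

set_option maxHeartbeats 2000000 in
lemma aux_hasDerivG (β c k r : ℝ) (hβ : β ≠ 0) (hk2 : k^2 = c) (hr2 : r^2 = 1 - 9*β*c/2)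
    (s : ℝ) (hD : (1 + r*Real.cosh (k*s)) ≠ 0) :
    HasDerivAt (fun t => -(k*r*Real.sinh (k*t)) *
        (3*c^2*((1+r*Real.cosh (k*t))⁻¹)^3 - (c/(3*β))*((1+r*Real.cosh (k*t))⁻¹)^2
          - (c/(3*β))*((1+r*Real.cosh (k*t))⁻¹)))
      ((c/2+1/(9*β))*(3*c/(1+r*Real.cosh (k*s)))^2 - (2/3)*(3*c/(1+r*Real.cosh (k*s)))^3
        + (β/2)*(3*c/(1+r*Real.cosh (k*s)))^4) s := by
  have hlin : HasDerivAt (fun t : ℝ => k * t) k s := by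
    simpa using (hasDerivAt_id s).const_mul k
  have hDd : HasDerivAt (fun t => 1 + r * Real.cosh (k*t)) (r * (Real.sinh (k*s) * k)) s :=
    ((hlin.cosh).const_mul r).const_add 1
  have hI : HasDerivAt (fun t => (1 + r * Real.cosh (k*t))⁻¹)
      (-(r * (Real.sinh (k*s) * k)) / (1 + r*Real.cosh (k*s))^2) s := hDd.inv hD
  have hsk : HasDerivAt (fun t => -(k*r*Real.sinh (k*t))) (-(k*r*(Real.cosh (k*s)*k))) s := by
    exact ((hlin.sinh).const_mul (k*r)).neg
  have hB := (((hI.pow 3).const_mul (3*c^2)).sub ((hI.pow 2).const_mul (c/(3*β)))).sub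
      (hI.const_mul (c/(3*β)))
  have hG := hsk.mul hB
  simp only [Pi.mul_apply, Pi.sub_apply, Pi.pow_apply] at hG
  refine hG.congr_deriv (Eq.symm ?_)
  have hv : Real.sinh (k*s)^2 = Real.cosh (k*s)^2 - 1 := by
    have := Real.cosh_sq_sub_sinh_sq (k*s); linarith
  set u := Real.cosh (k*s)
  set v := Real.sinh (k*s)
  have h18 : (18:ℝ)*β*(1+r*u)^4 ≠ 0 := by
    intro h; apply hD; simpa [hβ] using h
  have e2 : (c/2+1/(9*β))*(3*c/(1+r*u))^2 - (2/3)*(3*c/(1+r*u))^3 + (β/2)*(3*c/(1+r*u))^4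
      = ((81*β*c^3 + 18*c^2)*(1+r*u)^2 - 324*β*c^3*(1+r*u) + 729*β^2*c^4)/(18*β*(1+r*u)^4) := by
    field_simp
    ring
  rw [e2, eq_comm]
  push_cast
  calc _ = (-k^2*r*u*(54*β*c^2*(1+r*u) - 6*c*(1+r*u)^2 - 6*c*(1+r*u)^3) + k^2*r^2*v^2*(162*β*c^2 - 12*c*(1+r*u) - 6*c*(1+r*u)^2))/(18*β*(1+r*u)^4) := by
        field_simp
        ring
    _ = _ := by
        congr 1
        linear_combination (-r*u*(54*β*c^2*(1+r*u) - 6*c*(1+r*u)^2 - 6*c*(1+r*u)^3) + r^2*v^2*(162*β*c^2 - 12*c*(1+r*u) - 6*c*(1+r*u)^2)) * hk2 + (c*r^2*(162*β*c^2 - 12*c*(1+r*u) - 6*c*(1+r*u)^2)) * hv - (c*(162*β*c^2 - 12*c*(1+r*u) - 6*c*(1+r*u)^2)) * hr2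

lemma aux_int_exp (k : ℝ) (hk : 0 < k) :
    Integrable (fun x : ℝ => Real.exp (-(k*|x|))) := by
  rw [← integrableOn_univ, ← Set.Iio_union_Ici (a := (0:ℝ)), integrableOn_union]
  have hIci : IntegrableOn (fun x : ℝ => Real.exp (-(k*|x|))) (Ici 0) := by
    have h0 : IntegrableOn (fun x : ℝ => Real.exp (-k*x)) (Ici 0) :=
      (integrableOn_Ici_iff_integrableOn_Ioi).mpr (exp_neg_integrableOn_Ioi 0 hk)
    exact h0.congr_fun (fun x hx => by rw [abs_of_nonneg hx]; ring_nf) measurableSet_Ici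
  constructor
  · have hmap : (volume.restrict (Ici (0:ℝ))).map Neg.neg = volume.restrict (Iic 0) := by
      conv => rhs; rw [← Measure.map_neg_eq_self (volume : Measure ℝ),
        MeasurableEmbedding.restrict_map measurableEmbedding_neg]
      simp
    have : IntegrableOn (fun x : ℝ => Real.exp (-(k*|x|))) (Iic 0) := by
      rw [IntegrableOn, ← hmap, measurableEmbedding_neg.integrable_map_iff]
      simpa [Function.comp_def, abs_neg, IntegrableOn] using hIci
    exact this.mono_set Iio_subset_Iic_self
  · exact hIci

lemma aux_cosh_lb_s5 (k : ℝ) (hk : 0 < k) (s : ℝ) :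
    Real.exp (k*|s|) / 2 ≤ Real.cosh (k*s) := by
  rw [Real.cosh_eq]
  rcases le_total 0 s with h | h
  · rw [abs_of_nonneg h]
    have := (Real.exp_pos (-(k*s))).le
    linarith
  · rw [abs_of_nonpos h]
    have := (Real.exp_pos (k*s)).le
    have h2 : k*(-s) = -(k*s) := by ring
    rw [h2]
    linarith

lemma aux_integrable (c k r : ℝ) (hc : 0 < c) (hk : 0 < k) (hr : 0 < r)
    (n : ℕ) (hn : 1 ≤ n) :
    Integrable (fun s : ℝ => (3*c/(1+r*Real.cosh (k*s)))^n) := by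
  have hD : ∀ s : ℝ, 0 < 1 + r*Real.cosh (k*s) := fun s =>
    add_pos one_pos (mul_pos hr (Real.cosh_pos _))
  have hcont : Continuous (fun s : ℝ => (3*c/(1+r*Real.cosh (k*s)))^n) := by
    apply Continuous.pow
    exact continuous_const.div (by continuity) (fun s => (hD s).ne')
  apply Integrable.mono' (((aux_int_exp k hk).const_mul ((6*c/r)^n)))
    hcont.aestronglyMeasurable
  filter_upwards with s
  have hQpos : 0 < 3*c/(1+r*Real.cosh (k*s)) := by positivity
  have hb : 3*c/(1+r*Real.cosh (k*s)) ≤ (6*c/r) * Real.exp (-(k*|s|)) := by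
    have h1 : r * (Real.exp (k*|s|)/2) ≤ 1 + r*Real.cosh (k*s) := by
      have := aux_cosh_lb_s5 k hk s
      nlinarith [Real.cosh_pos (k*s)]
    rw [div_le_iff₀ (hD s)]
    have h2 : (6*c/r) * Real.exp (-(k*|s|)) * (r * (Real.exp (k*|s|)/2)) = 3*c := by
      have he : Real.exp (-(k*|s|)) * Real.exp (k*|s|) = 1 := by
        rw [← Real.exp_add]; simp
      field_simp
      linear_combination 6*he
    calc 3*c = (6*c/r) * Real.exp (-(k*|s|)) * (r * (Real.exp (k*|s|)/2)) := h2.symm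
      _ ≤ (6*c/r) * Real.exp (-(k*|s|)) * (1 + r*Real.cosh (k*s)) := by
          have : 0 < (6*c/r) * Real.exp (-(k*|s|)) := by positivity
          exact mul_le_mul_of_nonneg_left h1 this.le
  rw [Real.norm_eq_abs, abs_of_pos (pow_pos hQpos n)]
  calc (3*c/(1+r*Real.cosh (k*s)))^n ≤ ((6*c/r) * Real.exp (-(k*|s|)))^n := by
        exact pow_le_pow_left₀ hQpos.le hb n
    _ = (6*c/r)^n * (Real.exp (-(k*|s|)))^n := by rw [mul_pow]
    _ ≤ (6*c/r)^n * Real.exp (-(k*|s|)) := by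
        have h1 : Real.exp (-(k*|s|)) ≤ 1 := by
          apply Real.exp_le_one_iff.mpr
          simp [mul_nonneg hk.le (abs_nonneg s)]
        have h0 : (0:ℝ) ≤ Real.exp (-(k*|s|)) := (Real.exp_pos _).le
        have : (Real.exp (-(k*|s|)))^n ≤ Real.exp (-(k*|s|)) := by
          calc (Real.exp (-(k*|s|)))^n ≤ (Real.exp (-(k*|s|)))^1 :=
                pow_le_pow_of_le_one h0 h1 hn
            _ = _ := pow_one _
        have hC : (0:ℝ) ≤ (6*c/r)^n := by positivity
        exact mul_le_mul_of_nonneg_left this hC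

lemma aux_tendstoTop (β c k r : ℝ) (hβ : 0 < β) (hc : 0 < c) (hk : 0 < k) (hr : 0 < r) :
    Tendsto (fun t => -(k*r*Real.sinh (k*t)) *
        (3*c^2*((1+r*Real.cosh (k*t))⁻¹)^3 - (c/(3*β))*((1+r*Real.cosh (k*t))⁻¹)^2
          - (c/(3*β))*((1+r*Real.cosh (k*t))⁻¹))) atTop (𝓝 (k*c/(3*β))) := by
  have hD : ∀ s : ℝ, 0 < 1 + r*Real.cosh (k*s) := fun s =>
    add_pos one_pos (mul_pos hr (Real.cosh_pos _))
  -- E := exp (-(k*t)) tends to 0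
  have hks : Tendsto (fun t : ℝ => k*t) atTop atTop :=
    Tendsto.const_mul_atTop hk tendsto_id
  have hE : Tendsto (fun t : ℝ => Real.exp (-(k*t))) atTop (𝓝 0) :=
    Real.tendsto_exp_atBot.comp (tendsto_neg_atTop_atBot.comp hks)
  -- rewrite the function in terms of E
  have key : ∀ t : ℝ, -(k*r*Real.sinh (k*t)) *
        (3*c^2*((1+r*Real.cosh (k*t))⁻¹)^3 - (c/(3*β))*((1+r*Real.cosh (k*t))⁻¹)^2
          - (c/(3*β))*((1+r*Real.cosh (k*t))⁻¹))
      = -(k*r*(1-(Real.exp (-(k*t)))^2)/(2*Real.exp (-(k*t)) + r*(1+(Real.exp (-(k*t)))^2))) *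
        (3*c^2*(2*Real.exp (-(k*t))/(2*Real.exp (-(k*t)) + r*(1+(Real.exp (-(k*t)))^2)))^2
          - (c/(3*β))*(2*Real.exp (-(k*t))/(2*Real.exp (-(k*t)) + r*(1+(Real.exp (-(k*t)))^2)))
          - c/(3*β)) := by
    intro t
    have hE0 : 0 < Real.exp (-(k*t)) := Real.exp_pos _
    have hden : 0 < 2*Real.exp (-(k*t)) + r*(1+(Real.exp (-(k*t)))^2) := by positivity
    have hinv : Real.exp (k*t) = (Real.exp (-(k*t)))⁻¹ := by
      rw [← Real.exp_neg]; ring_nf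
    rw [Real.sinh_eq, Real.cosh_eq, hinv]
    have hDt := hD t
    rw [Real.cosh_eq, hinv] at hDt
    field_simp
  have hden : Tendsto (fun t : ℝ => 2*Real.exp (-(k*t)) + r*(1+(Real.exp (-(k*t)))^2))
      atTop (𝓝 (2*0 + r*(1+(0:ℝ)^2))) :=
    (hE.const_mul 2).add ((((hE.pow 2).const_add 1)).const_mul r)
  have hr0 : (2*0 + r*(1+(0:ℝ)^2)) = r := by ring
  rw [hr0] at hden
  have hnum : Tendsto (fun t : ℝ => -(k*r*(1-(Real.exp (-(k*t)))^2)))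
      atTop (𝓝 (-(k*r*(1-(0:ℝ)^2)))) := (((hE.pow 2).const_sub 1).const_mul (k*r)).neg
  have hfrac := hnum.div hden hr.ne'
  have h2x : Tendsto (fun t : ℝ => 2*Real.exp (-(k*t))/(2*Real.exp (-(k*t)) + r*(1+(Real.exp (-(k*t)))^2)))
      atTop (𝓝 (2*0/r)) := (hE.const_mul 2).div hden hr.ne'
  have hB := (((h2x.pow 2).const_mul (3*c^2)).sub (h2x.const_mul (c/(3*β)))).sub_const (c/(3*β))
  have final := hfrac.mul hB
  have hval : -(k*r*(1-(0:ℝ)^2))/r * (3*c^2*(2*0/r)^2 - (c/(3*β))*(2*0/r) - c/(3*β))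
      = k*c/(3*β) := by
    field_simp
    ring
  refine Tendsto.congr (fun t => (key t).symm) ?_
  rw [← hval]
  simpa [Pi.div_apply, neg_div] using final

set_option maxHeartbeats 2000000 in
theorem stmt5 (β c : ℝ) (hβ : 0 < β) (hc : 0 < c) (hc2 : c < 2 / (9 * β)) :
    gardnerEnergy β (gardnerQ c β)
      = (2 / (3 * β)) * c ^ ((3 : ℝ) / 2)
        - (1 / (9 * β)) * ∫ s : ℝ, (gardnerQ c β s) ^ 2 := by
  have h9βc : 9*β*c < 2 := by
    have h2 := (lt_div_iff₀ (by positivity : (0:ℝ) < 9*β)).mp hc2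
    nlinarith
  set k := Real.sqrt c with hkdef
  set r := Real.sqrt (1 - 9*β*c/2) with hrdef
  have hk : 0 < k := Real.sqrt_pos.mpr hc
  have hk2 : k^2 = c := Real.sq_sqrt hc.le
  have hrr : (0:ℝ) < 1 - 9*β*c/2 := by linarith
  have hr : 0 < r := Real.sqrt_pos.mpr hrr
  have hr2 : r^2 = 1 - 9*β*c/2 := Real.sq_sqrt hrr.le
  have hD : ∀ s : ℝ, 0 < 1 + r*Real.cosh (k*s) := fun s =>
    add_pos one_pos (mul_pos hr (Real.cosh_pos _))
  have hQeq : gardnerQ c β = fun s => 3*c/(1+r*Real.cosh (k*s)) := by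
    funext s
    simp only [gardnerQ, hkdef, hrdef]
  -- integrability
  have hi2 := aux_integrable c k r hc hk hr 2 (by norm_num)
  have hi3 := aux_integrable c k r hc hk hr 3 (by norm_num)
  have hi4 := aux_integrable c k r hc hk hr 4 (by norm_num)
  have hiA : Integrable (fun s : ℝ => c*(3*c/(1+r*Real.cosh (k*s)))^2
      - (2/3)*(3*c/(1+r*Real.cosh (k*s)))^3) :=
    (hi2.const_mul c).sub (hi3.const_mul (2/3))
  have hiB : Integrable (fun s : ℝ => (c/2+1/(9*β))*(3*c/(1+r*Real.cosh (k*s)))^2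
      - (2/3)*(3*c/(1+r*Real.cosh (k*s)))^3) :=
    (hi2.const_mul _).sub (hi3.const_mul (2/3))
  -- pointwise identity for the derivative squared
  have h1 : (∫ s : ℝ, (deriv (fun t : ℝ => 3*c/(1+r*Real.cosh (k*t))) s)^2)
      = ∫ s : ℝ, (c*(3*c/(1+r*Real.cosh (k*s)))^2 - (2/3)*(3*c/(1+r*Real.cosh (k*s)))^3
          + (β/2)*(3*c/(1+r*Real.cosh (k*s)))^4) := by
    congr 1
    funext s
    have hd : deriv (fun t : ℝ => 3*c/(1+r*Real.cosh (k*t))) s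
        = -(3*c*r*k*Real.sinh (k*s))/(1 + r*Real.cosh (k*s))^2 :=
      (aux_hasDerivQ c k r s (hD s).ne').deriv
    rw [hd]
    exact aux_sq β c k r hk2 hr2 s (hD s).ne'
  -- limits of the antiderivative
  have hbot : Tendsto (fun t => -(k*r*Real.sinh (k*t)) *
        (3*c^2*((1+r*Real.cosh (k*t))⁻¹)^3 - (c/(3*β))*((1+r*Real.cosh (k*t))⁻¹)^2
          - (c/(3*β))*((1+r*Real.cosh (k*t))⁻¹))) atBot (𝓝 (-(k*c/(3*β)))) := by
    have htop := aux_tendstoTop β c k r hβ hc hk hr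
    have h1 := (htop.comp tendsto_neg_atBot_atTop).neg
    refine Tendsto.congr (fun t => ?_) h1
    simp only [Function.comp]
    rw [mul_neg, Real.sinh_neg, Real.cosh_neg]
    ring
  -- FTC computation
  have hJ : (∫ s : ℝ, ((c/2+1/(9*β))*(3*c/(1+r*Real.cosh (k*s)))^2
        - (2/3)*(3*c/(1+r*Real.cosh (k*s)))^3 + (β/2)*(3*c/(1+r*Real.cosh (k*s)))^4))
      = k*c/(3*β) - -(k*c/(3*β)) := by
    refine MeasureTheory.integral_of_hasDerivAt_of_tendsto
      (fun x => aux_hasDerivG β c k r hβ.ne' hk2 hr2 x (hD x).ne') ?_ hbot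
      (aux_tendstoTop β c k r hβ hc hk hr)
    exact hiB.add (hi4.const_mul (β/2))
  -- expand by linearity
  have lin1 : (∫ s : ℝ, (c*(3*c/(1+r*Real.cosh (k*s)))^2 - (2/3)*(3*c/(1+r*Real.cosh (k*s)))^3
        + (β/2)*(3*c/(1+r*Real.cosh (k*s)))^4))
      = c*(∫ s : ℝ, (3*c/(1+r*Real.cosh (k*s)))^2) - (2/3)*(∫ s : ℝ, (3*c/(1+r*Real.cosh (k*s)))^3)
        + (β/2)*(∫ s : ℝ, (3*c/(1+r*Real.cosh (k*s)))^4) := by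
    rw [MeasureTheory.integral_add hiA (hi4.const_mul (β/2)),
      MeasureTheory.integral_sub (hi2.const_mul c) (hi3.const_mul (2/3)),
      MeasureTheory.integral_const_mul, MeasureTheory.integral_const_mul,
      MeasureTheory.integral_const_mul]
  have lin2 : (∫ s : ℝ, ((c/2+1/(9*β))*(3*c/(1+r*Real.cosh (k*s)))^2
        - (2/3)*(3*c/(1+r*Real.cosh (k*s)))^3 + (β/2)*(3*c/(1+r*Real.cosh (k*s)))^4))
      = (c/2+1/(9*β))*(∫ s : ℝ, (3*c/(1+r*Real.cosh (k*s)))^2)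
        - (2/3)*(∫ s : ℝ, (3*c/(1+r*Real.cosh (k*s)))^3)
        + (β/2)*(∫ s : ℝ, (3*c/(1+r*Real.cosh (k*s)))^4) := by
    rw [MeasureTheory.integral_add hiB (hi4.const_mul (β/2)),
      MeasureTheory.integral_sub (hi2.const_mul _) (hi3.const_mul (2/3)),
      MeasureTheory.integral_const_mul, MeasureTheory.integral_const_mul,
      MeasureTheory.integral_const_mul]
  have hc32 : c ^ ((3:ℝ)/2) = k*c := by
    have h1 : c ^ ((3:ℝ)/2) = c ^ ((1:ℝ)/2 + 1) := by norm_num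
    rw [h1, Real.rpow_add hc, Real.rpow_one, hkdef, Real.sqrt_eq_rpow]
  rw [lin2] at hJ
  simp only [gardnerEnergy, hQeq]
  rw [h1, lin1, hc32]
  linear_combination hJ
end

section
/- Let β > 0. For 0 < c < 2/(9β), the mass of the Gardner soliton, c ↦ (1/2)·∫_ℝ Q_{c,β}(s)² ds, is differentiable in c with derivative ∂_c [(1/2)·∫_ℝ Q_{c,β}²] = 9√c/(2 − 9βc); in particular this derivative is strictly positive for all 0 < c < 2/(9β) (the Weinstein stability condition holds). -/
open Real Filter MeasureTheory Set

lemma aux_pos {ρ σ : ℝ} (hρ : 0 < ρ) (hσ : 0 < σ) (h : ρ^2 + σ^2 = 1) (x : ℝ) :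
    0 < Real.cosh x + ρ + σ * Real.sinh x := by
  nlinarith [Real.one_le_cosh x, Real.cosh_sq x, sq_nonneg (ρ * Real.cosh x + 1),
    sq_nonneg (Real.cosh x + σ * Real.sinh x), Real.cosh_pos x]

lemma aux_pos2 {ρ : ℝ} (hρ : 0 < ρ) (x : ℝ) : 0 < 1 + ρ * Real.cosh x := by
  have := Real.cosh_pos x
  positivity

lemma hasDerivAt_F {ρ σ : ℝ} (hρ : 0 < ρ) (hσ : 0 < σ) (h : ρ^2 + σ^2 = 1) (x : ℝ) :
    HasDerivAt (fun x => (1/σ^3) * (Real.log (Real.cosh x + ρ + σ * Real.sinh x)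
        - Real.log (1 + ρ * Real.cosh x))
      - ρ * Real.sinh x / (σ^2 * (1 + ρ * Real.cosh x)))
      (1 / (1 + ρ * Real.cosh x)^2) x := by
  have hA := aux_pos hρ hσ h x
  have hB := aux_pos2 hρ x
  have h1 : HasDerivAt (fun x => Real.cosh x + ρ + σ * Real.sinh x)
      (Real.sinh x + σ * Real.cosh x) x :=
    ((Real.hasDerivAt_cosh x).add_const ρ).add ((Real.hasDerivAt_sinh x).const_mul σ)
  have h2 : HasDerivAt (fun x => 1 + ρ * Real.cosh x) (ρ * Real.sinh x) x :=
    ((Real.hasDerivAt_cosh x).const_mul ρ).const_add 1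
  have hlog1 := h1.log (ne_of_gt hA)
  have hlog2 := h2.log (ne_of_gt hB)
  have h3 : HasDerivAt (fun x => ρ * Real.sinh x) (ρ * Real.cosh x) x :=
    (Real.hasDerivAt_sinh x).const_mul ρ
  have h4 : HasDerivAt (fun x => σ^2 * (1 + ρ * Real.cosh x)) (σ^2 * (ρ * Real.sinh x)) x :=
    h2.const_mul (σ^2)
  have hden : σ^2 * (1 + ρ * Real.cosh x) ≠ 0 := by positivity
  have hdiv := h3.div h4 hden
  have htot := ((hlog1.sub hlog2).const_mul (1/σ^3)).sub hdiv
  refine htot.congr_deriv (Eq.symm ?_)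
  have hch := Real.cosh_sq_sub_sinh_sq x
  have key1 : (Real.sinh x + σ * Real.cosh x) / (Real.cosh x + ρ + σ * Real.sinh x)
      = (ρ * Real.sinh x + σ) / (1 + ρ * Real.cosh x) := by
    rw [div_eq_div_iff (ne_of_gt hA) (ne_of_gt hB)]
    linear_combination (-Real.sinh x) * h + ρ * σ * hch
  rw [key1]
  have key2 : 1/σ^3 * ((ρ * Real.sinh x + σ) / (1 + ρ * Real.cosh x)
      - ρ * Real.sinh x / (1 + ρ * Real.cosh x)) = 1/(σ^2 * (1 + ρ * Real.cosh x)) := by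
    rw [div_sub_div_same]
    field_simp
    ring
  rw [key2]
  have key3 : (ρ * Real.cosh x * (σ ^ 2 * (1 + ρ * Real.cosh x)) -
        ρ * Real.sinh x * (σ ^ 2 * (ρ * Real.sinh x))) / (σ ^ 2 * (1 + ρ * Real.cosh x)) ^ 2
      = ρ * (Real.cosh x + ρ) / (σ^2 * (1 + ρ * Real.cosh x)^2) := by
    rw [div_eq_div_iff (by positivity) (by positivity)]
    linear_combination σ^4 * (1 + ρ * Real.cosh x)^2 * ρ^2 * hch
  rw [key3]
  rw [div_sub_div _ _ (by positivity) (by positivity), div_eq_div_iff (by positivity) (by positivity)]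
  linear_combination (σ^2 * (1 + ρ * Real.cosh x)^3) * h

lemma tendsto_F {ρ σ : ℝ} (hρ : 0 < ρ) (hσ : 0 < σ) (h : ρ^2 + σ^2 = 1) :
    Filter.Tendsto (fun x => (1/σ^3) * (Real.log (Real.cosh x + ρ + σ * Real.sinh x)
        - Real.log (1 + ρ * Real.cosh x))
      - ρ * Real.sinh x / (σ^2 * (1 + ρ * Real.cosh x))) Filter.atTop
      (nhds ((1/σ^3) * (Real.log (1 + σ) - Real.log ρ) - 1/σ^2)) := by
  have hσ1 : σ ≤ 1 := by nlinarith
  have hu : Filter.Tendsto (fun x : ℝ => Real.exp (-x)) Filter.atTop (nhds 0) :=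
    Real.tendsto_exp_neg_atTop_nhds_zero
  have hDpos : ∀ x : ℝ, 0 < Real.exp (-x) + ρ/2 + ρ/2 * (Real.exp (-x))^2 := by
    intro x; positivity
  have TD : Filter.Tendsto (fun x : ℝ => Real.exp (-x) + ρ/2 + ρ/2 * (Real.exp (-x))^2)
      Filter.atTop (nhds (ρ/2)) := by
    have h' := (hu.add_const (ρ/2)).add ((hu.pow 2).const_mul (ρ/2))
    simpa using h'
  -- T1 : ratio tendsto (1+σ)/ρ
  have e1 : ∀ x : ℝ, (Real.cosh x + ρ + σ * Real.sinh x) / (1 + ρ * Real.cosh x)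
      = ((1+σ)/2 + (1-σ)/2 * (Real.exp (-x))^2 + ρ * Real.exp (-x))
        / (Real.exp (-x) + ρ/2 + ρ/2 * (Real.exp (-x))^2) := by
    intro x
    rw [div_eq_div_iff (ne_of_gt (aux_pos2 hρ x)) (ne_of_gt (hDpos x)),
      Real.cosh_eq, Real.sinh_eq, Real.exp_neg]
    have := Real.exp_ne_zero x
    field_simp
    ring
  have TN1 : Filter.Tendsto (fun x : ℝ => (1+σ)/2 + (1-σ)/2 * (Real.exp (-x))^2
      + ρ * Real.exp (-x)) Filter.atTop (nhds ((1+σ)/2)) := by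
    have h' := (((hu.pow 2).const_mul ((1-σ)/2)).const_add ((1+σ)/2)).add (hu.const_mul ρ)
    simpa using h'
  have T1 : Filter.Tendsto (fun x : ℝ => (Real.cosh x + ρ + σ * Real.sinh x) / (1 + ρ * Real.cosh x))
      Filter.atTop (nhds ((1+σ)/ρ)) := by
    have := TN1.div TD (by positivity)
    rw [show ((1+σ)/2)/(ρ/2) = (1+σ)/ρ by
      rw [div_div_div_comm]; norm_num] at this
    exact (Filter.tendsto_congr fun x => (e1 x).symm).mp this
  -- T2 : sinh/(1+ρ cosh) tendsto 1/ρ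
  have e2 : ∀ x : ℝ, Real.sinh x / (1 + ρ * Real.cosh x)
      = (1/2 - (Real.exp (-x))^2/2) / (Real.exp (-x) + ρ/2 + ρ/2 * (Real.exp (-x))^2) := by
    intro x
    rw [div_eq_div_iff (ne_of_gt (aux_pos2 hρ x)) (ne_of_gt (hDpos x)),
      Real.cosh_eq, Real.sinh_eq, Real.exp_neg]
    have := Real.exp_ne_zero x
    field_simp
    ring
  have TN2 : Filter.Tendsto (fun x : ℝ => 1/2 - (Real.exp (-x))^2/2) Filter.atTop
      (nhds (1/2 : ℝ)) := by
    have h' := Filter.Tendsto.const_sub (1/2 : ℝ) ((hu.pow 2).div_const 2)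
    simpa using h'
  have T2 : Filter.Tendsto (fun x : ℝ => Real.sinh x / (1 + ρ * Real.cosh x))
      Filter.atTop (nhds (1/ρ)) := by
    have := TN2.div TD (by positivity)
    rw [show ((1:ℝ)/2)/(ρ/2) = 1/ρ by rw [div_div_div_comm]; norm_num] at this
    exact (Filter.tendsto_congr fun x => (e2 x).symm).mp this
  -- log part
  have Tlog : Filter.Tendsto (fun x : ℝ => Real.log (Real.cosh x + ρ + σ * Real.sinh x)
      - Real.log (1 + ρ * Real.cosh x)) Filter.atTop (nhds (Real.log (1+σ) - Real.log ρ)) := by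
    have hcont := (Real.continuousAt_log (by positivity : ((1+σ)/ρ) ≠ 0)).tendsto.comp T1
    have : ∀ x : ℝ, Real.log ((Real.cosh x + ρ + σ * Real.sinh x) / (1 + ρ * Real.cosh x))
        = Real.log (Real.cosh x + ρ + σ * Real.sinh x) - Real.log (1 + ρ * Real.cosh x) :=
      fun x => Real.log_div (ne_of_gt (aux_pos hρ hσ h x)) (ne_of_gt (aux_pos2 hρ x))
    rw [show Real.log ((1+σ)/ρ) = Real.log (1+σ) - Real.log ρ from
      Real.log_div (by positivity) (ne_of_gt hρ)] at hcont
    exact hcont.congr fun x => by rw [Function.comp_apply, this x]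
  have Ttot := (Tlog.const_mul (1/σ^3)).sub (T2.const_mul (ρ/σ^2))
  rw [show (ρ/σ^2) * (1/ρ) = 1/σ^2 by field_simp] at Ttot
  refine (Filter.tendsto_congr fun x => ?_).mp Ttot
  rw [div_mul_div_comm, div_mul_eq_mul_div, mul_comm (σ^2)]

lemma massFormula (β : ℝ) (hβ : 0 < β) (c : ℝ) (hc : 0 < c) (hc2 : c < 2/(9*β)) :
    (1/2) * ∫ s : ℝ, (gardnerQ c β s)^2 =
      (9 * c^2 / Real.sqrt c) * ((1/(Real.sqrt (9*β*c/2))^3) *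
        (Real.log (1 + Real.sqrt (9*β*c/2)) - Real.log (Real.sqrt (1 - 9*β*c/2)))
        - 1/(Real.sqrt (9*β*c/2))^2) := by
  have h9 : 9*β*c < 2 := by
    have := (lt_div_iff₀ (by positivity : (0:ℝ) < 9*β)).mp hc2
    nlinarith
  set a := Real.sqrt c with ha_def
  set ρ := Real.sqrt (1 - 9*β*c/2) with hρ_def
  set σ := Real.sqrt (9*β*c/2) with hσ_def
  have ha : 0 < a := Real.sqrt_pos.mpr hc
  have hρ : 0 < ρ := Real.sqrt_pos.mpr (by linarith)
  have hσ : 0 < σ := Real.sqrt_pos.mpr (by positivity)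
  have hρ2 : ρ^2 = 1 - 9*β*c/2 := Real.sq_sqrt (by linarith)
  have hσ2 : σ^2 = 9*β*c/2 := Real.sq_sqrt (by positivity)
  have h : ρ^2 + σ^2 = 1 := by rw [hρ2, hσ2]; ring
  set K := 9 * c^2 / a with hK_def
  set L := (1/σ^3) * (Real.log (1 + σ) - Real.log ρ) - 1/σ^2 with hL_def
  set g : ℝ → ℝ := fun s => K * ((1/σ^3) * (Real.log (Real.cosh (a*s) + ρ + σ * Real.sinh (a*s))
      - Real.log (1 + ρ * Real.cosh (a*s)))
      - ρ * Real.sinh (a*s) / (σ^2 * (1 + ρ * Real.cosh (a*s)))) with hg_def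
  have hder : ∀ s : ℝ, HasDerivAt g ((gardnerQ c β s)^2) s := by
    intro s
    have hlin : HasDerivAt (fun s : ℝ => a*s) a s := by
      simpa using (hasDerivAt_id s).const_mul a
    have hcomp := ((hasDerivAt_F hρ hσ h (a*s)).comp s hlin).const_mul K
    refine hcomp.congr_deriv (Eq.symm ?_)
    simp only [gardnerQ, ← hρ_def, ← ha_def]
    rw [div_pow, hK_def]
    have hden := aux_pos2 hρ (a*s)
    field_simp
    ring
  have hmono : Filter.Tendsto (fun s : ℝ => a*s) Filter.atTop Filter.atTop :=
    Filter.Tendsto.const_mul_atTop ha Filter.tendsto_id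
  have htop : Filter.Tendsto g Filter.atTop (nhds (K * L)) :=
    ((tendsto_F hρ hσ h).comp hmono).const_mul K
  have hg0 : g 0 = 0 := by
    simp [hg_def, Real.cosh_zero, Real.sinh_zero, add_comm]
  have hIoi : ∫ s in Ioi (0:ℝ), (gardnerQ c β s)^2 = K * L := by
    rw [MeasureTheory.integral_Ioi_of_hasDerivAt_of_nonneg' (fun x _ => hder x)
      (fun x _ => sq_nonneg _) htop, hg0, sub_zero]
  have hIntIoi : IntegrableOn (fun s => (gardnerQ c β s)^2) (Ioi (0:ℝ)) :=
    MeasureTheory.integrableOn_Ioi_deriv_of_nonneg' (fun x _ => hder x)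
      (fun x _ => sq_nonneg _) htop
  have hEven : ∀ s : ℝ, gardnerQ c β (-s) = gardnerQ c β s := by
    intro s; simp [gardnerQ, mul_neg, Real.cosh_neg]
  have hIic : ∫ s in Iic (0:ℝ), (gardnerQ c β s)^2 = K * L := by
    have h2 := integral_comp_neg_Ioi (0:ℝ) (fun s => (gardnerQ c β s)^2)
    simp only [hEven, neg_zero] at h2
    rw [← h2, hIoi]
  have hA : MeasurableEmbedding (fun x : ℝ => -x) :=
    (Homeomorph.neg ℝ).isClosedEmbedding.measurableEmbedding
  have hIntIic : IntegrableOn (fun s => (gardnerQ c β s)^2) (Iic (0:ℝ)) := by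
    have hmap : (volume : Measure ℝ) = Measure.map (fun x : ℝ => -x) volume := by
      rw [show (fun x : ℝ => -x) = Neg.neg from rfl, Measure.map_neg_eq_self]
    rw [IntegrableOn, hmap, ← IntegrableOn, hA.integrableOn_map_iff]
    have : ((fun x : ℝ => -x) ⁻¹' Iic 0) = Ici (0:ℝ) := by
      ext x; simp
    rw [this]
    have : ((fun s => (gardnerQ c β s)^2) ∘ (fun x : ℝ => -x)) = fun s => (gardnerQ c β s)^2 := by
      funext x; simp [Function.comp, hEven]
    rw [this]
    exact (integrableOn_Ici_iff_integrableOn_Ioi (f := fun s => (gardnerQ c β s)^2)).mpr hIntIoi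
  have hsplit := intervalIntegral.integral_Iic_add_Ioi (b := (0:ℝ)) hIntIic hIntIoi
  rw [← hsplit, hIic, hIoi]
  ring

lemma massAlgebra (β : ℝ) (hβ : 0 < β) (c : ℝ) (hc : 0 < c) (hc2 : c < 2/(9*β)) :
    (9 * c^2 / Real.sqrt c) * ((1/(Real.sqrt (9*β*c/2))^3) *
        (Real.log (1 + Real.sqrt (9*β*c/2)) - Real.log (Real.sqrt (1 - 9*β*c/2)))
        - 1/(Real.sqrt (9*β*c/2))^2)
    = 2*Real.sqrt 2/(3*(Real.sqrt β)^3) *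
        (Real.log (1 + Real.sqrt (9*β*c/2)) - Real.log (Real.sqrt (1 - 9*β*c/2)))
      - 2*Real.sqrt c/β := by
  have h9 : 9*β*c < 2 := by
    have := (lt_div_iff₀ (by positivity : (0:ℝ) < 9*β)).mp hc2
    nlinarith
  set a := Real.sqrt c with ha_def
  set σ := Real.sqrt (9*β*c/2) with hσ_def
  set B := Real.sqrt β with hB_def
  set X := Real.log (1 + σ) - Real.log (Real.sqrt (1 - 9*β*c/2)) with hX_def
  have ha : 0 < a := Real.sqrt_pos.mpr hc
  have hσ : 0 < σ := Real.sqrt_pos.mpr (by positivity)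
  have hB : 0 < B := Real.sqrt_pos.mpr hβ
  have ha2 : a^2 = c := Real.sq_sqrt hc.le
  have hσ2 : σ^2 = 9*β*c/2 := Real.sq_sqrt (by positivity)
  have hB2 : B^2 = β := Real.sq_sqrt hβ.le
  have h2s : (Real.sqrt 2)^2 = 2 := Real.sq_sqrt (by norm_num)
  have h2pos : (0:ℝ) < Real.sqrt 2 := Real.sqrt_pos.mpr (by norm_num)
  have hs : Real.sqrt 2 * σ = 3 * (B * a) := by
    rw [hσ_def, ← Real.sqrt_mul (by norm_num : (0:ℝ) ≤ 2),
      show (2 * (9*β*c/2) : ℝ) = 9*(β*c) by ring, Real.sqrt_mul (by norm_num : (0:ℝ) ≤ 9),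
      Real.sqrt_mul hβ.le, show Real.sqrt 9 = 3 by
        rw [show (9:ℝ) = 3^2 by norm_num, Real.sqrt_sq]; norm_num]
  have hcube : 2 * Real.sqrt 2 * σ^3 = 27 * B^3 * a^3 := by
    linear_combination ((Real.sqrt 2 * σ)^2 + 3*(B*a)*(Real.sqrt 2 * σ) + 9*B^2*a^2) * hs
      - (Real.sqrt 2 * σ^3) * h2s
  have hP : 9 * c^2 / a * (1/σ^3) = 2*Real.sqrt 2/(3*B^3) := by
    field_simp
    linear_combination (-a) * hcube - 27*B^3*(a^2+c) * ha2
  have hQ : 9 * c^2 / a * (1/σ^2) = 2*a/β := by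
    field_simp
    linear_combination (-2*σ^2) * ha2 - 2*c*hσ2
  calc (9 * c^2 / a) * ((1/σ^3) * X - 1/σ^2)
      = (9 * c^2 / a * (1/σ^3)) * X - 9 * c^2 / a * (1/σ^2) := by ring
    _ = 2*Real.sqrt 2/(3*B^3) * X - 2*a/β := by rw [hP, hQ]

lemma massDeriv (β : ℝ) (hβ : 0 < β) (c : ℝ) (hc : 0 < c) (hc2 : c < 2/(9*β)) :
    HasDerivAt (fun c' : ℝ => 2*Real.sqrt 2/(3*(Real.sqrt β)^3) *
        (Real.log (1 + Real.sqrt (9*β*c'/2)) - Real.log (Real.sqrt (1 - 9*β*c'/2)))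
      - 2*Real.sqrt c'/β)
      (9 * Real.sqrt c / (2 - 9*β*c)) c := by
  have h9 : 9*β*c < 2 := by
    have := (lt_div_iff₀ (by positivity : (0:ℝ) < 9*β)).mp hc2
    nlinarith
  set a := Real.sqrt c with ha_def
  set ρ := Real.sqrt (1 - 9*β*c/2) with hρ_def
  set σ := Real.sqrt (9*β*c/2) with hσ_def
  set B := Real.sqrt β with hB_def
  have ha : 0 < a := Real.sqrt_pos.mpr hc
  have hρ : 0 < ρ := Real.sqrt_pos.mpr (by linarith)
  have hσ : 0 < σ := Real.sqrt_pos.mpr (by positivity)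
  have hB : 0 < B := Real.sqrt_pos.mpr hβ
  have ha2 : a^2 = c := Real.sq_sqrt hc.le
  have hρ2 : ρ^2 = 1 - 9*β*c/2 := Real.sq_sqrt (by linarith)
  have hσ2 : σ^2 = 9*β*c/2 := Real.sq_sqrt (by positivity)
  have hB2 : B^2 = β := Real.sq_sqrt hβ.le
  have h2s : (Real.sqrt 2)^2 = 2 := Real.sq_sqrt (by norm_num)
  have hs : Real.sqrt 2 * σ = 3 * (B * a) := by
    rw [hσ_def, ← Real.sqrt_mul (by norm_num : (0:ℝ) ≤ 2),
      show (2 * (9*β*c/2) : ℝ) = 9*(β*c) by ring, Real.sqrt_mul (by norm_num : (0:ℝ) ≤ 9),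
      Real.sqrt_mul hβ.le, show Real.sqrt 9 = 3 by
        rw [show (9:ℝ) = 3^2 by norm_num, Real.sqrt_sq]; norm_num]
  -- inner derivatives
  have h1 : HasDerivAt (fun c' : ℝ => 9*β*c'/2) (9*β/2) c := by
    have := ((hasDerivAt_id c).const_mul (9*β)).div_const 2
    simpa [mul_assoc] using this
  have h1' : HasDerivAt (fun c' : ℝ => 1 - 9*β*c'/2) (-(9*β/2)) c :=
    h1.const_sub 1
  have hsq1 : HasDerivAt (fun c' : ℝ => Real.sqrt (9*β*c'/2)) (1/(2*σ) * (9*β/2)) c :=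
    (Real.hasDerivAt_sqrt (by positivity : (9*β*c/2 : ℝ) ≠ 0)).comp c h1
  have hlog1 : HasDerivAt (fun c' : ℝ => Real.log (1 + Real.sqrt (9*β*c'/2)))
      ((1/(2*σ) * (9*β/2)) / (1 + σ)) c := by
    exact (hsq1.const_add 1).log (by positivity)
  have hsq2 : HasDerivAt (fun c' : ℝ => Real.sqrt (1 - 9*β*c'/2)) (1/(2*ρ) * -(9*β/2)) c :=
    (Real.hasDerivAt_sqrt (by intro h'; rw [h'] at hρ2; nlinarith)).comp c h1'
  have hlog2 : HasDerivAt (fun c' : ℝ => Real.log (Real.sqrt (1 - 9*β*c'/2)))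
      ((1/(2*ρ) * -(9*β/2)) / ρ) c := hsq2.log (ne_of_gt hρ)
  have hsqc : HasDerivAt (fun c' : ℝ => 2*Real.sqrt c'/β) (2*(1/(2*a))/β) c :=
    ((Real.hasDerivAt_sqrt (ne_of_gt hc)).const_mul 2).div_const β
  have htot := ((hlog1.sub hlog2).const_mul (2*Real.sqrt 2/(3*B^3))).sub hsqc
  refine htot.congr_deriv (Eq.symm ?_)
  have hralt : ρ^2 = 1 - σ^2 := by rw [hρ2, hσ2]
  have h7 : σ = 3/2*(a*(B*Real.sqrt 2)) := by
    have h2σ : 2*σ = 3*(B*a)*Real.sqrt 2 := by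
      linear_combination Real.sqrt 2 * hs - σ * h2s
    linarith
  rw [show (2 - 9*β*c : ℝ) = 2*ρ^2 by rw [hρ2]; ring]
  have hσ' : 2*σ^2 = 9*B^2*a^2 := by
    linear_combination (Real.sqrt 2 * σ + 3*(B*a)) * hs - σ^2 * h2s
  have e2 : Real.sqrt 2 = 3*B*a/σ := by
    rw [eq_div_iff hσ.ne']; linear_combination hs
  have e3 : 2*(1/(2*a))/β = 9*a/(2*σ^2) := by
    rw [← hB2]; field_simp; linear_combination hσ'
  have e4 : (1/(2*ρ) * -(9*β/2))/ρ = -(9*β/4)/ρ^2 := by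
    field_simp
    norm_num
  rw [e2, e3, e4, hralt, ← hB2]
  have hne : 1 - σ^2 ≠ 0 := by rw [← hralt]; positivity
  have h1σ : 1 + σ ≠ 0 := by positivity
  field_simp
  ring

theorem stmt6 (β : ℝ) (hβ : 0 < β) :
    ∀ c : ℝ, 0 < c → c < 2 / (9 * β) →
      HasDerivAt (fun c' : ℝ => (1 / 2) * ∫ s : ℝ, (gardnerQ c' β s) ^ 2)
        (9 * Real.sqrt c / (2 - 9 * β * c)) c ∧
      0 < 9 * Real.sqrt c / (2 - 9 * β * c) := by
  intro c hc hc2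
  have h9 : 9 * β * c < 2 := by
    have := (lt_div_iff₀ (by positivity : (0:ℝ) < 9*β)).mp hc2
    nlinarith
  constructor
  · refine (massDeriv β hβ c hc hc2).congr_of_eventuallyEq ?_
    filter_upwards [Ioo_mem_nhds hc hc2] with c' hc'
    rw [massFormula β hβ c' hc'.1 hc'.2, massAlgebra β hβ c' hc'.1 hc'.2]
  · have h1 : 0 < 2 - 9 * β * c := by linarith
    have h2 : 0 < Real.sqrt c := Real.sqrt_pos.mpr hc
    positivity
end

section
/- Let f : ℝ → ℝ be three times continuously differentiable, let b₀ ∈ ℝ and b₁ ≠ 0, and define f̃(s) := −(1/b₁)·[f(b₀ + b₁s) − f(b₀) − b₁·f'(b₀)·s]. Let ũ : ℝ × ℝ → ℝ be three times continuously differentiable and define u(t,x) := b₀ + b₁·ũ(t, x + f'(b₀)·t). Then u satisfies the defocusing generalized KdV equation u_t + (u_{xx} − f(u))_x = 0 at every point of ℝ × ℝ if and only if ũ = ũ(t,y) satisfies the focusing generalized KdV equation ũ_t + (ũ_{yy} + f̃(ũ))_y = 0 at every point of ℝ × ℝ. -/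
/-- `u` solves the defocusing generalized KdV equation `u_t + (u_{xx} - f(u))_x = 0`
pointwise on ℝ × ℝ (first variable is time, second is space). -/
def IsDefocusingGKdVSolution (f : ℝ → ℝ) (u : ℝ → ℝ → ℝ) : Prop :=
  ∀ t x : ℝ,
    deriv (fun τ => u τ x) t
      + deriv (fun ξ => deriv (deriv (u t)) ξ - f (u t ξ)) x = 0

/-- `u` solves the focusing generalized KdV equation `u_t + (u_{yy} + f(u))_y = 0`
pointwise on ℝ × ℝ. -/
def IsFocusingGKdVSolution (f : ℝ → ℝ) (u : ℝ → ℝ → ℝ) : Prop :=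
  ∀ t y : ℝ,
    deriv (fun τ => u τ y) t
      + deriv (fun η => deriv (deriv (u t)) η + f (u t η)) y = 0

theorem stmt12 (f : ℝ → ℝ) (hf : ContDiff ℝ 3 f) (b₀ b₁ : ℝ) (hb₁ : b₁ ≠ 0)
    (v : ℝ → ℝ → ℝ) (hv : ContDiff ℝ 3 (Function.uncurry v)) :
    IsDefocusingGKdVSolution f
        (fun t x => b₀ + b₁ * v t (x + deriv f b₀ * t))
      ↔ IsFocusingGKdVSolution
          (fun s => -(1 / b₁) * (f (b₀ + b₁ * s) - f b₀ - b₁ * deriv f b₀ * s)) v := by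
  set c := deriv f b₀ with hc
  have hfd : Differentiable ℝ f := hf.differentiable (by norm_num)
  have hVd : Differentiable ℝ (Function.uncurry v) := hv.differentiable (by norm_num)
  have hgt : ∀ t, ContDiff ℝ 3 (v t) := fun t =>
    hv.comp (contDiff_const.prodMk contDiff_id)
  have hgd : ∀ t, Differentiable ℝ (v t) := fun t => (hgt t).differentiable (by norm_num)
  have hD1 : ∀ t, ContDiff ℝ 2 (deriv (v t)) := by
    intro t
    have h := hgt t
    rw [show (3 : WithTop ℕ∞) = 2 + 1 by norm_num] at h
    exact (contDiff_succ_iff_deriv.mp h).2.2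
  have hD1d : ∀ t, Differentiable ℝ (deriv (v t)) :=
    fun t => (hD1 t).differentiable (by norm_num)
  have hD2d : ∀ t, Differentiable ℝ (deriv (deriv (v t))) := by
    intro t
    have h := hD1 t
    rw [show (2 : WithTop ℕ∞) = 1 + 1 by norm_num] at h
    exact ((contDiff_succ_iff_deriv.mp h).2.2).differentiable (by norm_num)
  have hvt : ∀ t y : ℝ, HasDerivAt (fun τ => v τ y)
      (fderiv ℝ (Function.uncurry v) (t, y) (1, 0)) t := by
    intro t y
    have h := (hVd (t, y)).hasFDerivAt
    have hcur : HasDerivAt (fun τ : ℝ => (τ, y)) ((1 : ℝ), (0 : ℝ)) t :=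
      (hasDerivAt_id t).prodMk (hasDerivAt_const t y)
    exact h.comp_hasDerivAt t hcur
  have hvy : ∀ t y : ℝ, HasDerivAt (v t)
      (fderiv ℝ (Function.uncurry v) (t, y) (0, 1)) y := by
    intro t y
    have h := (hVd (t, y)).hasFDerivAt
    have hcur : HasDerivAt (fun η : ℝ => (t, η)) ((0 : ℝ), (1 : ℝ)) y :=
      (hasDerivAt_const y t).prodMk (hasDerivAt_id y)
    exact h.comp_hasDerivAt y hcur
  have hvty : ∀ t x : ℝ, HasDerivAt (fun τ => v τ (x + c * τ))
      (fderiv ℝ (Function.uncurry v) (t, x + c * t) (1, c)) t := by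
    intro t x
    have h := (hVd (t, x + c * t)).hasFDerivAt
    have hcur : HasDerivAt (fun τ : ℝ => (τ, x + c * τ)) ((1 : ℝ), c) t := by
      have := (hasDerivAt_id t).prodMk (((hasDerivAt_id t).const_mul c).const_add x)
      simpa using this
    exact h.comp_hasDerivAt t hcur
  have hlin : ∀ t y : ℝ, fderiv ℝ (Function.uncurry v) (t, y) (1, c)
      = fderiv ℝ (Function.uncurry v) (t, y) (1, 0)
        + c * fderiv ℝ (Function.uncurry v) (t, y) (0, 1) := by
    intro t y
    have h1 : ((1 : ℝ), c) = ((1 : ℝ), (0 : ℝ)) + c • ((0 : ℝ), (1 : ℝ)) := by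
      simp [Prod.ext_iff]
    rw [h1, map_add, map_smul]
    simp
  have key : ∀ t x : ℝ,
      deriv (fun τ => b₀ + b₁ * v τ (x + c * τ)) t
        + deriv (fun ξ => deriv (deriv (fun x' => b₀ + b₁ * v t (x' + c * t))) ξ
            - f (b₀ + b₁ * v t (ξ + c * t))) x
      = b₁ * (deriv (fun τ => v τ (x + c * t)) t
        + deriv (fun η => deriv (deriv (v t)) η
            + -(1 / b₁) * (f (b₀ + b₁ * v t η) - f b₀ - b₁ * c * v t η)) (x + c * t)) := by
    intro t x
    set y := x + c * t with hy
    have hA : deriv (fun τ => b₀ + b₁ * v τ (x + c * τ)) t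
        = b₁ * (deriv (fun τ => v τ y) t + c * deriv (v t) y) := by
      have h := ((hvty t x).const_mul b₁).const_add b₀
      rw [h.deriv, (hvt t y).deriv, (hvy t y).deriv, hlin t y]
    have hB1 : deriv (fun x' => b₀ + b₁ * v t (x' + c * t))
        = fun ξ => b₁ * deriv (v t) (ξ + c * t) := by
      funext ξ
      have h : HasDerivAt (fun x' => b₀ + b₁ * v t (x' + c * t))
          (b₁ * (deriv (v t) (ξ + c * t) * 1)) ξ :=
        ((((hgd t) (ξ + c * t)).hasDerivAt.comp ξ
          ((hasDerivAt_id ξ).add_const (c * t))).const_mul b₁).const_add b₀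
      rw [h.deriv]; ring
    have hB2 : deriv (fun ξ => b₁ * deriv (v t) (ξ + c * t))
        = fun ξ => b₁ * deriv (deriv (v t)) (ξ + c * t) := by
      funext ξ
      have h : HasDerivAt (fun ξ' => b₁ * deriv (v t) (ξ' + c * t))
          (b₁ * (deriv (deriv (v t)) (ξ + c * t) * 1)) ξ :=
        by have h0 := (hD1d t (ξ + c * t)).hasDerivAt.comp ξ
             ((hasDerivAt_id ξ).add_const (c * t))
           exact h0.const_mul b₁
      rw [h.deriv]; ring
    have hB : deriv (fun ξ => deriv (deriv (fun x' => b₀ + b₁ * v t (x' + c * t))) ξ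
        - f (b₀ + b₁ * v t (ξ + c * t))) x
        = b₁ * deriv (deriv (deriv (v t))) y
          - deriv f (b₀ + b₁ * v t y) * (b₁ * deriv (v t) y) := by
      have hfun : (fun ξ => deriv (deriv (fun x' => b₀ + b₁ * v t (x' + c * t))) ξ
          - f (b₀ + b₁ * v t (ξ + c * t)))
          = fun ξ => b₁ * deriv (deriv (v t)) (ξ + c * t)
              - f (b₀ + b₁ * v t (ξ + c * t)) := by
        funext ξ; rw [hB1, hB2]
      rw [hfun]
      have h1 : HasDerivAt (fun ξ : ℝ => b₁ * deriv (deriv (v t)) (ξ + c * t))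
          (b₁ * (deriv (deriv (deriv (v t))) y * 1)) x :=
        by have h0 := (hD2d t y).hasDerivAt.comp x ((hasDerivAt_id x).add_const (c * t))
           exact h0.const_mul b₁
      have hinner : HasDerivAt (fun ξ : ℝ => b₀ + b₁ * v t (ξ + c * t))
          (b₁ * (deriv (v t) y * 1)) x :=
        (((hgd t y).hasDerivAt.comp x
          ((hasDerivAt_id x).add_const (c * t))).const_mul b₁).const_add b₀
      have h2 : HasDerivAt (fun ξ : ℝ => f (b₀ + b₁ * v t (ξ + c * t)))
          (deriv f (b₀ + b₁ * v t y) * (b₁ * (deriv (v t) y * 1))) x :=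
        (hfd (b₀ + b₁ * v t y)).hasDerivAt.comp x hinner
      rw [(h1.fun_sub h2).deriv]; ring
    have hft : ∀ s : ℝ, HasDerivAt
        (fun s' => -(1 / b₁) * (f (b₀ + b₁ * s') - f b₀ - b₁ * c * s'))
        (-(1 / b₁) * (deriv f (b₀ + b₁ * s) * (b₁ * 1) - b₁ * c * 1)) s := by
      intro s
      have hi : HasDerivAt (fun s' : ℝ => b₀ + b₁ * s') (b₁ * 1) s :=
        ((hasDerivAt_id s).const_mul b₁).const_add b₀
      have h1 : HasDerivAt (fun s' => f (b₀ + b₁ * s'))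
          (deriv f (b₀ + b₁ * s) * (b₁ * 1)) s :=
        (hfd (b₀ + b₁ * s)).hasDerivAt.comp s hi
      have h2 : HasDerivAt (fun s' : ℝ => b₁ * c * s') (b₁ * c * 1) s :=
        (hasDerivAt_id s).const_mul (b₁ * c)
      exact ((h1.sub_const (f b₀)).sub h2).const_mul (-(1 / b₁))
    have hC : deriv (fun η => deriv (deriv (v t)) η
        + -(1 / b₁) * (f (b₀ + b₁ * v t η) - f b₀ - b₁ * c * v t η)) y
        = deriv (deriv (deriv (v t))) y
          + -(1 / b₁) * (deriv f (b₀ + b₁ * v t y) * (b₁ * 1) - b₁ * c * 1)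
            * deriv (v t) y := by
      have h1 : HasDerivAt (fun η => deriv (deriv (v t)) η)
          (deriv (deriv (deriv (v t))) y) y := (hD2d t y).hasDerivAt
      have h2 : HasDerivAt (fun η => -(1 / b₁) * (f (b₀ + b₁ * v t η) - f b₀ - b₁ * c * v t η))
          (-(1 / b₁) * (deriv f (b₀ + b₁ * v t y) * (b₁ * 1) - b₁ * c * 1) * deriv (v t) y) y :=
        (hft (v t y)).comp y (hgd t y).hasDerivAt
      rw [(h1.fun_add h2).deriv]
    rw [hA, hB, hC]
    field_simp
    ring
  simp only [IsDefocusingGKdVSolution, IsFocusingGKdVSolution]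
  constructor
  · intro h t y
    have h2 := h t (y - c * t)
    rw [key t (y - c * t), show y - c * t + c * t = y by ring] at h2
    rcases mul_eq_zero.mp h2 with h4 | h4
    · exact absurd h4 hb₁
    · exact h4
  · intro h t x
    rw [key t x, h t (x + c * t), mul_zero]
end

section
/- Let u : ℝ → ℝ be twice continuously differentiable, nonnegative, satisfy u(s) → 0 and u'(s) → 0 as s → ±∞, and solve the elliptic Gardner equation u'' − u + u² − (2/9)·u³ = 0 at every point of ℝ. Then u ≡ 0. In other words, the elliptic Gardner equation with parameters c = 1 and β = 2/9 admits no nontrivial nonnegative localized solution. -/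
open Filter Real

theorem stmt19 (u : ℝ → ℝ) (hu : ContDiff ℝ 2 u)
    (hnonneg : ∀ s : ℝ, 0 ≤ u s)
    (hu_top : Filter.Tendsto u Filter.atTop (nhds 0))
    (hu_bot : Filter.Tendsto u Filter.atBot (nhds 0))
    (hu'_top : Filter.Tendsto (deriv u) Filter.atTop (nhds 0))
    (hu'_bot : Filter.Tendsto (deriv u) Filter.atBot (nhds 0))
    (heq : ∀ s : ℝ,
      deriv (deriv u) s - u s + (u s) ^ 2 - (2 / 9) * (u s) ^ 3 = 0) :
    ∀ s : ℝ, u s = 0 := by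
  have hdiff : Differentiable ℝ u := hu.differentiable (by norm_num)
  have hcd : ContDiff ℝ 1 (deriv u) :=
    (contDiff_succ_iff_deriv.mp (show ContDiff ℝ ((1 : WithTop ℕ∞) + 1) u from by
      exact_mod_cast hu)).2.2
  have hdiff' : Differentiable ℝ (deriv u) := hcd.differentiable (by norm_num)
  have h1 : ∀ s, HasDerivAt u (deriv u s) s := fun s => (hdiff s).hasDerivAt
  have h2 : ∀ s, HasDerivAt (deriv u) (deriv (deriv u) s) s := fun s => (hdiff' s).hasDerivAt
  set E : ℝ → ℝ := fun s => (deriv u s)^2/2 - (u s)^2/2 + (u s)^3/3 - (u s)^4/18 with hEdef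
  have hE : ∀ s, HasDerivAt E 0 s := by
    intro s
    have h := (((((h2 s).pow 2).div_const 2).sub (((h1 s).pow 2).div_const 2)).add
      (((h1 s).pow 3).div_const 3)).sub (((h1 s).pow 4).div_const 18)
    have h' : HasDerivAt E
        (deriv u s * (deriv (deriv u) s - u s + (u s)^2 - 2/9*(u s)^3)) s := by
      refine HasDerivAt.congr_deriv (h.congr_of_eventuallyEq (Filter.Eventually.of_forall fun x => by simp [E])) (by push_cast; ring)
    rw [heq s, mul_zero] at h'
    exact h'
  have hEconst : ∀ s, E s = E 0 := by
    intro s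
    exact is_const_of_deriv_eq_zero (fun x => (hE x).differentiableAt) (fun x => (hE x).deriv) s 0
  have hEtop : Tendsto E atTop (nhds 0) := by
    have : Tendsto E atTop (nhds ((0:ℝ)^2/2 - (0:ℝ)^2/2 + (0:ℝ)^3/3 - (0:ℝ)^4/18)) :=
      ((((hu'_top.pow 2).div_const 2).sub ((hu_top.pow 2).div_const 2)).add
        ((hu_top.pow 3).div_const 3)).sub ((hu_top.pow 4).div_const 18)
    simpa using this
  have hE0 : E 0 = 0 := by
    have h3 : Tendsto E atTop (nhds (E 0)) := by
      have : E = fun _ => E 0 := funext hEconst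
      rw [this]; exact tendsto_const_nhds
    exact tendsto_nhds_unique h3 hEtop
  have key : ∀ s, (deriv u s)^2 = (u s - (u s)^2/3)^2 := by
    intro s
    have h := hEconst s
    rw [hE0] at h
    simp only [hEdef] at h
    nlinarith [h]
  -- suppose u is positive somewhere
  by_contra hcon
  push_neg at hcon
  obtain ⟨s₀, hs₀⟩ := hcon
  have hs₀pos : 0 < u s₀ := lt_of_le_of_ne (hnonneg s₀) (Ne.symm hs₀)
  obtain ⟨B, hB⟩ := (hu_top.eventually_lt_const hs₀pos).exists_forall_of_atTop
  obtain ⟨A, hA⟩ := (hu_bot.eventually_lt_const hs₀pos).exists_forall_of_atBot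
  set A' := min A s₀ with hA'
  set B' := max B s₀ with hB'
  have hAB : A' ≤ B' := le_trans (min_le_right _ _) (le_max_right _ _)
  obtain ⟨t, ht_mem, ht_max⟩ := (isCompact_Icc (a := A') (b := B')).exists_isMaxOn
    (Set.nonempty_Icc.mpr hAB) (hdiff.continuous.continuousOn)
  have hs₀mem : s₀ ∈ Set.Icc A' B' := ⟨min_le_right _ _, le_max_right _ _⟩
  have hglobal : ∀ s, u s ≤ u t := by
    intro s
    rcases lt_or_ge s A' with h | h
    · have : u s < u s₀ := hA s (lt_of_lt_of_le h (min_le_left _ _)).le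
      exact this.le.trans (ht_max hs₀mem)
    · rcases le_or_gt s B' with h2 | h2
      · exact ht_max ⟨h, h2⟩
      · have : u s < u s₀ := hB s ((le_max_left _ _).trans h2.le)
        exact this.le.trans (ht_max hs₀mem)
  have hloc : IsLocalMax u t := Filter.Eventually.of_forall hglobal
  have hdt : deriv u t = 0 := hloc.deriv_eq_zero
  have ht3 : u t = 3 := by
    have h := key t
    rw [hdt] at h
    have h2 : u t - (u t)^2/3 = 0 := by nlinarith [h]
    have hpos : 0 < u t := lt_of_lt_of_le hs₀pos (hglobal s₀)
    nlinarith [h2, hpos]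
  have hle3 : ∀ s, u s ≤ 3 := fun s => ht3 ▸ hglobal s
  -- Gronwall via ψ s = (3 - u s) * exp (-s)
  set ψ : ℝ → ℝ := fun s => (3 - u s) * Real.exp (-s) with hψdef
  have hψ : ∀ s, HasDerivAt ψ ((-(deriv u s)) * Real.exp (-s) + (3 - u s) * (-Real.exp (-s))) s := by
    intro s
    have he : HasDerivAt (fun x : ℝ => Real.exp (-x)) (-Real.exp (-s)) s := by
      have := (Real.hasDerivAt_exp (-s)).comp s (hasDerivAt_neg s)
      simpa [mul_comm, Function.comp_def] using this
    exact ((h1 s).const_sub 3).mul he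
  have hψ' : ∀ s, deriv ψ s ≤ 0 := by
    intro s
    rw [(hψ s).deriv]
    have hexp : 0 < Real.exp (-s) := Real.exp_pos _
    have hw : 0 ≤ 3 - u s := by linarith [hle3 s]
    have h9 : (u s)^2 ≤ 9 := by nlinarith [hnonneg s, hle3 s]
    have ha2 : (deriv u s)^2 ≤ (3 - u s)^2 := by
      nlinarith [key s, mul_nonneg (sq_nonneg (3 - u s)) (by linarith : (0:ℝ) ≤ 9 - (u s)^2)]
    have habs : deriv u s + (3 - u s) ≥ 0 := by
      nlinarith [ha2, hw, mul_nonneg hw hw]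
    nlinarith [habs, hexp]
  have hanti : Antitone ψ := by
    apply antitone_of_deriv_nonpos
    · exact fun s => (hψ s).differentiableAt
    · exact hψ'
  have hψt : ψ t = 0 := by simp [hψdef, ht3]
  have hconst : ∀ s ≥ t, u s = 3 := by
    intro s hs
    have h1' : ψ s ≤ 0 := hψt ▸ hanti hs
    have h2' : 0 ≤ ψ s := mul_nonneg (by linarith [hle3 s]) (Real.exp_pos _).le
    have : ψ s = 0 := le_antisymm h1' h2'
    have hexp : Real.exp (-s) ≠ 0 := (Real.exp_pos _).ne'
    have := mul_eq_zero.mp this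
    rcases this with h | h
    · linarith
    · exact absurd h hexp
  have htend3 : Tendsto u atTop (nhds 3) := by
    have : u =ᶠ[atTop] fun _ => (3:ℝ) := by
      filter_upwards [eventually_ge_atTop t] with s hs
      exact hconst s hs
    exact Tendsto.congr' this.symm tendsto_const_nhds
  have : (3:ℝ) = 0 := tendsto_nhds_unique htend3 hu_top
  norm_num at this
end
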